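/- arXiv:2010.03104 — 9 statements merged into one kernel-verified Lean document; each statement's English description precedes it below -/
import Mathlib

section
/- Let A be a finite set with τ elements and let d < τ be a positive integer. Suppose Dependent : 2^A × A → Bool is a relation such that for every subset A' ⊆ A with |A'| > d, there exists x ∈ A' with Dependent(A' \ {x}, x) = true. Then there exists an element x ∈ A and a collection of at least ⌊(τ-1)/d⌋/(d+1) pairwise disjoint subsets S₁, …, S_N of A (not containing x) such that Dependent(S_i, x) = true for all i. -/
open Finset

lemma pack_aux {α : Type*} [DecidableEq α] (d : ℕ) (hd : 0 < d) :
    ∀ (m : ℕ) (M : Finset α), M.card = m → ∀ F ⊆ M.powersetCard d,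
    ∃ (N : ℕ) (S : Fin N → Finset α), (∀ i, S i ∈ F) ∧
      (∀ i j, i ≠ j → Disjoint (S i) (S j)) ∧
      (M.card / d) * F.card ≤ N * (M.card.choose d) := by
  intro m
  induction m using Nat.strong_induction_on with
  | _ m IH =>
    intro M hM F hF
    subst hM
    set m := M.card with hm
    rcases Nat.lt_or_ge (m / d) 1 with hk | hk1
    · -- m / d = 0 : trivial
      refine ⟨0, Fin.elim0, (fun i => i.elim0), (fun i => i.elim0), ?_⟩
      have h0 : m / d = 0 := Nat.lt_one_iff.mp hk
      simp [h0]
    rcases Nat.lt_or_ge (m / d) 2 with hk | hk2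
    · -- m / d = 1
      have hk : m / d = 1 := by omega
      rcases F.eq_empty_or_nonempty with hFe | ⟨D, hD⟩
      · refine ⟨0, Fin.elim0, (fun i => i.elim0), (fun i => i.elim0), ?_⟩
        simp [hFe]
      · refine ⟨1, (fun _ => D), (fun _ => hD), ?_, ?_⟩
        · intro i j hij
          exact absurd (Subsingleton.elim i j) hij
        · have h1 : F.card ≤ m.choose d := by
            calc F.card ≤ (M.powersetCard d).card := card_le_card hF
            _ = m.choose d := card_powersetCard d M
          simpa [hk] using h1
    · -- main case : m / d ≥ 2, so 2*d ≤ m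
      have hdm : d ≤ m := by
        by_contra h
        have : m / d = 0 := Nat.div_eq_of_lt (by omega)
        omega
      have h2d : 2 * d ≤ m := (Nat.le_div_iff_mul_le hd).1 hk2
      set k := m / d with hkdef
      set c' := (m - d).choose d with hc'
      have hc'pos : 0 < c' := Nat.choose_pos (by omega)
      set Pd := M.powersetCard d with hPd
      -- the value function
      set g : Finset α → ℕ := fun D =>
        (if D ∈ F then 1 else 0) * c' + (k - 1) * (F.filter fun E => Disjoint E D).card with hg
      -- identity : sum of g over Pd
      have hsum : ∑ D ∈ Pd, g D = k * F.card * c' := by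
        rw [Finset.sum_add_distrib]
        have h1 : ∑ D ∈ Pd, (if D ∈ F then 1 else 0) * c' = F.card * c' := by
          rw [← Finset.sum_mul]
          congr 1
          rw [← Finset.card_filter]
          congr 1
          rw [Finset.filter_mem_eq_inter, Finset.inter_eq_right.mpr hF]
        have h2 : ∑ D ∈ Pd, (k - 1) * (F.filter fun E => Disjoint E D).card
            = (k - 1) * (F.card * c') := by
          rw [← Finset.mul_sum]
          congr 1
          have : ∀ D ∈ Pd, (F.filter fun E => Disjoint E D).card
              = ∑ E ∈ F, if Disjoint E D then 1 else 0 := fun D _ => Finset.card_filter _ _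
          rw [Finset.sum_congr rfl this, Finset.sum_comm]
          have hEterm : ∀ E ∈ F, (∑ D ∈ Pd, if Disjoint E D then 1 else 0) = c' := by
            intro E hE
            have hEM := (mem_powersetCard.1 (hF hE))
            rw [← Finset.card_filter]
            have : Pd.filter (fun D => Disjoint E D) = (M \ E).powersetCard d := by
              ext D
              simp only [Finset.mem_filter, hPd, mem_powersetCard, Finset.subset_sdiff]
              constructor
              · rintro ⟨⟨h1, h2⟩, h3⟩; exact ⟨⟨h1, h3.symm⟩, h2⟩
              · rintro ⟨⟨h1, h3⟩, h2⟩; exact ⟨⟨h1, h2⟩, h3.symm⟩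
            rw [this, card_powersetCard, Finset.card_sdiff_of_subset hEM.1, hEM.2]
          rw [Finset.sum_congr rfl hEterm, Finset.sum_const, smul_eq_mul]
        rw [h1, h2]
        have hk' : k - 1 + 1 = k := by omega
        calc F.card * c' + (k - 1) * (F.card * c') = ((k - 1) + 1) * (F.card * c') := by ring
        _ = k * F.card * c' := by rw [hk']; ring
      -- pigeonhole
      have hPdne : Pd.Nonempty := powersetCard_nonempty.2 hdm
      have hpig : ∃ D ∈ Pd, k * F.card * c' ≤ (m.choose d) * g D := by
        refine Finset.exists_le_of_sum_le hPdne (le_of_eq ?_)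
        calc ∑ _D ∈ Pd, k * F.card * c' = Pd.card * (k * F.card * c') := by
              rw [Finset.sum_const, smul_eq_mul]
        _ = m.choose d * (k * F.card * c') := by rw [hPd, card_powersetCard]
        _ = m.choose d * ∑ D ∈ Pd, g D := by rw [hsum]
        _ = ∑ D ∈ Pd, m.choose d * g D := by rw [Finset.mul_sum]
      obtain ⟨D, hDPd, hDineq⟩ := hpig
      obtain ⟨hDM, hDcard⟩ := mem_powersetCard.1 hDPd
      -- recurse
      set F' := F.filter (fun E => Disjoint E D) with hF'
      have hF'sub : F' ⊆ (M \ D).powersetCard d := by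
        intro E hE
        rw [Finset.mem_filter] at hE
        have := mem_powersetCard.1 (hF hE.1)
        exact mem_powersetCard.2 ⟨Finset.subset_sdiff.2 ⟨this.1, hE.2⟩, this.2⟩
      have hMD : (M \ D).card = m - d := by rw [Finset.card_sdiff_of_subset hDM, hDcard]
      have hmd_lt : m - d < m := by omega
      obtain ⟨N', S', hS'F, hS'disj, hS'count⟩ := IH (m - d) hmd_lt (M \ D) hMD F' hF'sub
      rw [hMD] at hS'count
      have hdiv : (m - d) / d = k - 1 := by
        have : m / d = (m - d) / d + 1 := by
          conv_lhs => rw [← Nat.sub_add_cancel hdm]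
          rw [Nat.add_div_right _ hd]
        omega
      rw [hdiv] at hS'count
      by_cases hDF : D ∈ F
      · -- add D as an extra block
        refine ⟨N' + 1, (fun i => if h : (i : ℕ) < N' then S' ⟨i, h⟩ else D), ?_, ?_, ?_⟩
        · intro i
          by_cases h : (i : ℕ) < N'
          · simp only [dif_pos h]; exact (Finset.mem_filter.1 (hS'F ⟨i, h⟩)).1
          · simp only [dif_neg h]; exact hDF
        · intro i j hij
          by_cases hi : (i : ℕ) < N' <;> by_cases hj : (j : ℕ) < N'
          · simp only [dif_pos hi, dif_pos hj]
            refine hS'disj _ _ ?_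
            intro hcc
            apply hij
            have h2 := congrArg (fun t : Fin N' => (t : ℕ)) hcc
            exact Fin.ext h2
          · simp only [dif_pos hi, dif_neg hj]
            exact (Finset.mem_filter.1 (hS'F ⟨i, hi⟩)).2
          · simp only [dif_neg hi, dif_pos hj]
            exact ((Finset.mem_filter.1 (hS'F ⟨j, hj⟩)).2).symm
          · exfalso
            apply hij
            have hi' : (i : ℕ) = N' := by omega
            have hj' : (j : ℕ) = N' := by omega
            exact Fin.ext (hi'.trans hj'.symm)
        · -- arithmetic
          have hgD : g D = c' + (k - 1) * F'.card := by simp [hg, hDF, hF']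
          rw [hgD] at hDineq
          have step1 : m.choose d * (c' + (k - 1) * F'.card)
              ≤ m.choose d * (c' + N' * c') := by
            apply Nat.mul_le_mul_left
            exact Nat.add_le_add_left hS'count _
          have step2 : m.choose d * (c' + N' * c') = ((N' + 1) * m.choose d) * c' := by ring
          have : k * F.card * c' ≤ ((N' + 1) * m.choose d) * c' := by
            calc k * F.card * c' ≤ m.choose d * (c' + (k - 1) * F'.card) := hDineq
            _ ≤ m.choose d * (c' + N' * c') := step1
            _ = ((N' + 1) * m.choose d) * c' := step2
          exact Nat.le_of_mul_le_mul_right this hc'pos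
      · refine ⟨N', S', (fun i => (Finset.mem_filter.1 (hS'F i)).1), hS'disj, ?_⟩
        have hgD : g D = (k - 1) * F'.card := by simp [hg, hDF, hF']
        rw [hgD] at hDineq
        have : k * F.card * c' ≤ (N' * m.choose d) * c' := by
          calc k * F.card * c' ≤ m.choose d * ((k - 1) * F'.card) := hDineq
          _ ≤ m.choose d * (N' * c') := Nat.mul_le_mul_left _ hS'count
          _ = (N' * m.choose d) * c' := by ring
        exact Nat.le_of_mul_le_mul_right this hc'pos

/-- **Combinatorial dependence lemma.** Let `A` be a finite set with `τ` elements and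
`d < τ` a positive integer. Suppose `Dependent : 2^A × A → Bool` is such that every
subset `A' ⊆ A` with `|A'| > d` contains an element `x` with
`Dependent (A' \ {x}, x) = true`. Then there is an element `x ∈ A` and at least
`⌊(τ-1)/d⌋/(d+1)` pairwise disjoint subsets of `A` (not containing `x`) on each of
which `x` is dependent. -/
theorem stmt0 {α : Type*} [DecidableEq α] (A : Finset α) (d : ℕ) (hd : 0 < d)
    (hdτ : d < A.card) (Dependent : Finset α → α → Bool)
    (hdep : ∀ A' ⊆ A, d < A'.card → ∃ x ∈ A', Dependent (A'.erase x) x = true) :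
    ∃ x ∈ A, ∃ N : ℕ, (((A.card - 1) / d : ℕ) : ℝ) / ((d : ℝ) + 1) ≤ (N : ℝ) ∧
      ∃ S : Fin N → Finset α, (∀ i, S i ⊆ A) ∧ (∀ i, x ∉ S i) ∧
        (∀ i j, i ≠ j → Disjoint (S i) (S j)) ∧ (∀ i, Dependent (S i) x = true) := by
  classical
  set n := A.card with hn
  have hAne : A.Nonempty := Finset.card_pos.1 (by omega)
  obtain ⟨a₀, ha₀⟩ := hAne
  set W : α → Finset (Finset α) := fun x =>
    ((A.erase x).powersetCard d).filter (fun S => Dependent S x = true) with hWdef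
  set P := A.powersetCard (d + 1) with hPdef
  have hpivex : ∀ B ∈ P, ∃ x ∈ B, Dependent (B.erase x) x = true := by
    intro B hB
    obtain ⟨hBA, hBcard⟩ := Finset.mem_powersetCard.1 hB
    exact hdep B hBA (by omega)
  set piv : Finset α → α := fun B =>
    if h : ∃ x ∈ B, Dependent (B.erase x) x = true then h.choose else a₀ with hpiv
  have hpivmem : ∀ B ∈ P, piv B ∈ B := by
    intro B hB
    have h := hpivex B hB
    simp only [hpiv, dif_pos h]
    exact h.choose_spec.1
  have hpivdep : ∀ B ∈ P, Dependent (B.erase (piv B)) (piv B) = true := by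
    intro B hB
    have h := hpivex B hB
    simp only [hpiv, dif_pos h]
    exact h.choose_spec.2
  -- counting : every (d+1)-subset contributes a witness
  have hcount : P.card ≤ ∑ x ∈ A, (W x).card := by
    rw [Finset.card_eq_sum_card_fiberwise (f := piv) (t := A)
      (fun B hB => (Finset.mem_powersetCard.1 hB).1 (hpivmem B hB))]
    apply Finset.sum_le_sum
    intro x hx
    apply Finset.card_le_card_of_injOn (fun B => B.erase x)
    · intro B hB
      rw [Finset.mem_coe, Finset.mem_filter] at hB; rw [Finset.mem_coe]
      obtain ⟨hBP, hBx⟩ := hB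
      obtain ⟨hBA, hBcard⟩ := Finset.mem_powersetCard.1 hBP
      have hxB : x ∈ B := hBx ▸ hpivmem B hBP
      refine Finset.mem_filter.2 ⟨?_, ?_⟩
      · refine Finset.mem_powersetCard.2 ⟨Finset.erase_subset_erase x hBA, ?_⟩
        rw [Finset.card_erase_of_mem hxB, hBcard]
        omega
      · have h := hpivdep B hBP
        rw [hBx] at h
        exact h
    · intro B1 h1 B2 h2 he
      rw [Finset.mem_coe, Finset.mem_filter] at h1 h2
      have hx1 : x ∈ B1 := h1.2 ▸ hpivmem B1 h1.1
      have hx2 : x ∈ B2 := h2.2 ▸ hpivmem B2 h2.1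
      rw [← Finset.insert_erase hx1, ← Finset.insert_erase hx2]
      exact congrArg (insert x) he
  -- pigeonhole over x
  have hsum2 : ∑ _x ∈ A, P.card ≤ ∑ x ∈ A, n * (W x).card := by
    rw [Finset.sum_const, smul_eq_mul, ← Finset.mul_sum]
    exact Nat.mul_le_mul_left _ hcount
  obtain ⟨x, hxA, hx⟩ := Finset.exists_le_of_sum_le ⟨a₀, ha₀⟩ hsum2
  -- binomial identity
  have hn1 : n - 1 + 1 = n := by omega
  have hid : n * ((n - 1).choose d) = n.choose (d + 1) * (d + 1) := by
    have h1 := Nat.add_one_mul_choose_eq (n - 1) d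
    rw [hn1] at h1
    exact h1
  have hWx : (n - 1).choose d ≤ (d + 1) * (W x).card := by
    have hPcard : P.card = n.choose (d + 1) := Finset.card_powersetCard _ _
    have h2 : n * ((n - 1).choose d) ≤ n * ((d + 1) * (W x).card) := by
      calc n * ((n - 1).choose d) = (d + 1) * P.card := by rw [hPcard, hid]; ring
      _ ≤ (d + 1) * (n * (W x).card) := Nat.mul_le_mul_left _ hx
      _ = n * ((d + 1) * (W x).card) := by ring
    exact Nat.le_of_mul_le_mul_left h2 (by omega)
  -- packing
  have hAe : (A.erase x).card = n - 1 := Finset.card_erase_of_mem hxA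
  obtain ⟨N, S, hSF, hSdisj, hScount⟩ :=
    pack_aux d hd (n - 1) (A.erase x) hAe (W x) (Finset.filter_subset _ _)
  rw [hAe] at hScount
  have hkN : (n - 1) / d ≤ (d + 1) * N := by
    have hcpos : 0 < (n - 1).choose d := Nat.choose_pos (by omega)
    have h3 : ((n - 1) / d) * ((n - 1).choose d) ≤ ((d + 1) * N) * ((n - 1).choose d) := by
      calc ((n - 1) / d) * ((n - 1).choose d)
          ≤ ((n - 1) / d) * ((d + 1) * (W x).card) := Nat.mul_le_mul_left _ hWx
      _ = (d + 1) * (((n - 1) / d) * (W x).card) := by ring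
      _ ≤ (d + 1) * (N * ((n - 1).choose d)) := Nat.mul_le_mul_left _ hScount
      _ = ((d + 1) * N) * ((n - 1).choose d) := by ring
    exact Nat.le_of_mul_le_mul_right h3 hcpos
  refine ⟨x, hxA, N, ?_, S, ?_, ?_, hSdisj, ?_⟩
  · rw [div_le_iff₀ (by positivity)]
    have hcast : (((n - 1) / d : ℕ) : ℝ) ≤ (((d + 1) * N : ℕ) : ℝ) := Nat.cast_le.mpr hkN
    push_cast at hcast ⊢
    linarith
  · intro i
    have h := Finset.mem_filter.1 (hSF i)
    exact (Finset.mem_powersetCard.1 h.1).1.trans (Finset.erase_subset _ _)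
  · intro i hmem
    have h := Finset.mem_filter.1 (hSF i)
    have := (Finset.mem_powersetCard.1 h.1).1 hmem
    exact (Finset.mem_erase.1 this).1 rfl
  · intro i
    exact (Finset.mem_filter.1 (hSF i)).2
end

section
/- Let P and Q be probability measures on a measurable space (Ω, F) with P absolutely continuous with respect to Q. Then for any measurable set A ∈ F, P(A) + Q(Aᶜ) ≥ (1/2)·exp(−KL(P ‖ Q)). -/
open MeasureTheory Real
open scoped ENNReal

lemma two_sqrt_mul_le {x y : ℝ} (hx : 0 ≤ x) (hy : 0 ≤ y) :
    2 * (Real.sqrt x * Real.sqrt y) ≤ x + y := by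
  nlinarith [sq_nonneg (Real.sqrt x - Real.sqrt y), Real.sq_sqrt hx, Real.sq_sqrt hy,
    Real.sqrt_nonneg x, Real.sqrt_nonneg y]

lemma scalarC {a b s t T : ℝ} (ha : 0 ≤ a) (hb : 0 ≤ b) (hs : 0 ≤ s) (ht : 0 ≤ t)
    (hab : a + b = 1) (hst : s + t ≤ 1) (has : 0 < a → 0 < s) (hbt : 0 < b → 0 < t)
    (htT : t ≤ T) :
    Real.exp (a * Real.log (s / a) + b * Real.log (t / b)) ≤ 2 * (a + T) := by
  rcases eq_or_lt_of_le ha with ha0 | ha0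
  · -- a = 0, b = 1
    have hb1 : b = 1 := by linarith
    have ht0 : 0 < t := hbt (by linarith)
    rw [← ha0]
    simp [hb1, Real.exp_log ht0]
    linarith
  rcases eq_or_lt_of_le hb with hb0 | hb0
  · -- b = 0, a = 1
    have ha1 : a = 1 := by linarith
    have hs0 : 0 < s := has ha0
    rw [← hb0]
    have hs1 : s ≤ 1 := by linarith
    simp [ha1, Real.exp_log hs0]
    linarith
  -- main case
  have hs0 : 0 < s := has ha0
  have ht0 : 0 < t := hbt hb0
  have hsa : 0 < s / a := div_pos hs0 ha0
  have htb : 0 < t / b := div_pos ht0 hb0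
  have hexp : Real.exp (a * Real.log (s / a) + b * Real.log (t / b))
      = (s / a) ^ a * (t / b) ^ b := by
    rw [Real.exp_add, Real.rpow_def_of_pos hsa, Real.rpow_def_of_pos htb,
      mul_comm (Real.log (s/a)) a, mul_comm (Real.log (t/b)) b]
  rw [hexp]
  -- u := sqrt(s/a)^a * sqrt(t/b)^b
  have hgm := Real.geom_mean_le_arith_mean2_weighted ha hb (Real.sqrt_nonneg (s/a))
    (Real.sqrt_nonneg (t/b)) hab
  have hu_sq : (Real.sqrt (s/a) ^ a * Real.sqrt (t/b) ^ b) ^ 2 = (s/a) ^ a * (t/b) ^ b := by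
    rw [mul_pow, pow_two, pow_two, ← Real.mul_rpow (Real.sqrt_nonneg _) (Real.sqrt_nonneg _),
      ← Real.mul_rpow (Real.sqrt_nonneg _) (Real.sqrt_nonneg _),
      Real.mul_self_sqrt hsa.le, Real.mul_self_sqrt htb.le]
  have hsum : a * Real.sqrt (s/a) + b * Real.sqrt (t/b) = Real.sqrt (a*s) + Real.sqrt (b*t) := by
    rw [← Real.sqrt_sq ha, ← Real.sqrt_mul (sq_nonneg a), ← Real.sqrt_sq hb,
      ← Real.sqrt_mul (sq_nonneg b)]
    congr 1 <;> · congr 1; field_simp; rw [Real.sq_sqrt (sq_nonneg _)]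
  -- (sqrt(as) + sqrt(bt))^2 ≤ 2 * (a + t)
  set m₁ := min a s; set M₁ := max a s; set m₂ := min b t; set M₂ := max b t
  have has' : a * s = m₁ * M₁ := (min_mul_max a s).symm
  have hbt' : b * t = m₂ * M₂ := (min_mul_max b t).symm
  have hm₁ : 0 ≤ m₁ := le_min ha hs
  have hm₂ : 0 ≤ m₂ := le_min hb ht
  have hM₁ : 0 ≤ M₁ := le_max_of_le_left ha
  have hM₂ : 0 ≤ M₂ := le_max_of_le_left hb
  have hsq : (Real.sqrt (a*s) + Real.sqrt (b*t)) ^ 2 ≤ 2 * (a + t) := by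
    have h1 : Real.sqrt (a*s) * Real.sqrt (b*t) = Real.sqrt (m₁ * M₂) * Real.sqrt (m₂ * M₁) := by
      rw [← Real.sqrt_mul (mul_nonneg ha hs), ← Real.sqrt_mul (mul_nonneg hm₁ hM₂)]
      congr 1; rw [has', hbt']; ring
    have h2 : 2 * (Real.sqrt (m₁ * M₂) * Real.sqrt (m₂ * M₁)) ≤ m₁ * M₂ + m₂ * M₁ :=
      two_sqrt_mul_le (mul_nonneg hm₁ hM₂) (mul_nonneg hm₂ hM₁)
    have h3 : (Real.sqrt (a*s) + Real.sqrt (b*t)) ^ 2 ≤ (m₁ + m₂) * (M₁ + M₂) := by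
      have e1 : Real.sqrt (a*s) ^ 2 = a * s := Real.sq_sqrt (mul_nonneg ha hs)
      have e2 : Real.sqrt (b*t) ^ 2 = b * t := Real.sq_sqrt (mul_nonneg hb ht)
      nlinarith [h1, h2]
    have h4 : m₁ + m₂ ≤ a + t := add_le_add (min_le_left a s) (min_le_right b t)
    have h5 : M₁ + M₂ ≤ 2 := by
      have : M₁ ≤ a + s := max_le (by linarith) (by linarith)
      have : M₂ ≤ b + t := max_le (by linarith) (by linarith)
      linarith [max_le (show a ≤ a + s by linarith) (show s ≤ a + s by linarith)]
    calc (Real.sqrt (a*s) + Real.sqrt (b*t)) ^ 2 ≤ (m₁ + m₂) * (M₁ + M₂) := h3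
      _ ≤ (a + t) * 2 := by
          apply mul_le_mul h4 h5 (by positivity) (by linarith)
      _ = 2 * (a + t) := by ring
  have hfinal : (s/a) ^ a * (t/b) ^ b ≤ 2 * (a + t) := by
    rw [← hu_sq]
    have hu_nonneg : 0 ≤ Real.sqrt (s/a) ^ a * Real.sqrt (t/b) ^ b :=
      mul_nonneg (Real.rpow_nonneg (Real.sqrt_nonneg _) _)
        (Real.rpow_nonneg (Real.sqrt_nonneg _) _)
    calc (Real.sqrt (s/a) ^ a * Real.sqrt (t/b) ^ b) ^ 2
        ≤ (a * Real.sqrt (s/a) + b * Real.sqrt (t/b)) ^ 2 := by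
          apply pow_le_pow_left₀ hu_nonneg hgm
      _ = (Real.sqrt (a*s) + Real.sqrt (b*t)) ^ 2 := by rw [hsum]
      _ ≤ 2 * (a + t) := hsq
  linarith

lemma setIntegral_pos_of_ae_pos {Ω : Type*} [MeasurableSpace Ω] {μ : Measure Ω}
    {g : Ω → ℝ} {B : Set Ω} (hμB : μ B ≠ 0) (hg : Integrable g μ)
    (hgpos : ∀ᵐ ω ∂μ, 0 < g ω) : 0 < ∫ ω in B, g ω ∂μ := by
  have hgB : 0 ≤ᵐ[μ.restrict B] g := ae_restrict_of_ae (hgpos.mono fun ω h => h.le)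
  rw [setIntegral_pos_iff_support_of_nonneg_ae hgB hg.integrableOn]
  have heq : μ (Function.support g ∩ B) = μ B := by
    refine le_antisymm (measure_mono Set.inter_subset_right) (measure_mono_ae ?_)
    filter_upwards [hgpos] with ω h hωB
    exact ⟨h.ne', hωB⟩
  rw [heq]
  exact hμB.bot_lt

lemma jensen_log {Ω : Type*} [MeasurableSpace Ω] (μ : Measure Ω) [IsFiniteMeasure μ]
    {g : Ω → ℝ} {B : Set Ω} (hg : Integrable g μ)
    (hgpos : ∀ᵐ ω ∂μ, 0 < g ω) (hlog : Integrable (fun ω => Real.log (g ω)) μ) :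
    ∫ ω in B, Real.log (g ω) ∂μ ≤
      (μ B).toReal * Real.log ((∫ ω in B, g ω ∂μ) / (μ B).toReal) := by
  set m := (μ B).toReal with hm
  rcases eq_or_lt_of_le (ENNReal.toReal_nonneg : (0:ℝ) ≤ m) with hm0 | hm0
  · have hB0 : μ B = 0 := by
      have := measure_ne_top μ B
      simpa [ENNReal.toReal_eq_zero_iff, this] using hm0.symm
    rw [Measure.restrict_eq_zero.mpr hB0]
    simp [← hm0]
  have hμB : μ B ≠ 0 := by
    intro h; rw [h] at hm0; simp at hm0
  set I := ∫ ω in B, g ω ∂μ with hI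
  have hgB : 0 ≤ᵐ[μ.restrict B] g := ae_restrict_of_ae (hgpos.mono fun ω h => h.le)
  have hIpos : 0 < I := by
    rw [hI, setIntegral_pos_iff_support_of_nonneg_ae hgB hg.integrableOn]
    have heq : μ (Function.support g ∩ B) = μ B := by
      refine le_antisymm (measure_mono Set.inter_subset_right) (measure_mono_ae ?_)
      filter_upwards [hgpos] with ω h hωB
      exact ⟨h.ne', hωB⟩
    rw [heq]
    exact hμB.bot_lt
  set c := I / m with hc
  have hcpos : 0 < c := div_pos hIpos hm0
  have hptwise : ∀ᵐ ω ∂(μ.restrict B), Real.log (g ω) ≤ g ω / c - 1 + Real.log c := by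
    filter_upwards [ae_restrict_of_ae hgpos] with ω hω
    have h1 := Real.log_le_sub_one_of_pos (div_pos hω hcpos)
    rw [Real.log_div hω.ne' hcpos.ne'] at h1
    linarith
  have hdiv : Integrable (fun ω => g ω / c) (μ.restrict B) := hg.restrict.div_const c
  have hsub : Integrable (fun ω => g ω / c - 1) (μ.restrict B) := hdiv.sub (integrable_const 1)
  have hint1 : Integrable (fun ω => g ω / c - 1 + Real.log c) (μ.restrict B) :=
    hsub.add (integrable_const _)
  calc ∫ ω in B, Real.log (g ω) ∂μ
      ≤ ∫ ω in B, (g ω / c - 1 + Real.log c) ∂μ :=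
        integral_mono_ae hlog.restrict hint1 hptwise
    _ = (∫ ω in B, g ω ∂μ) / c - m * 1 + m * Real.log c := by
        rw [integral_add hsub (integrable_const _), integral_sub hdiv (integrable_const 1)]
        rw [integral_const, integral_const, integral_div]
        simp [hm, smul_eq_mul, measureReal_def]
    _ = m * Real.log c := by
        have : I / c = m := by
          rw [hc]; field_simp
        rw [← hI, this]; ring

lemma mul_ofReal_toReal_inv_le_one (r : ℝ≥0∞) : r * ENNReal.ofReal r.toReal⁻¹ ≤ 1 := by
  rcases eq_or_ne r ∞ with rfl | htop
  · simp
  rcases eq_or_ne r 0 with rfl | h0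
  · simp
  rw [← ENNReal.toReal_inv, ENNReal.ofReal_toReal (by simp [h0]),
    ENNReal.mul_inv_cancel h0 htop]

/-- **High-probability Pinsker inequality.** For probability measures `P ≪ Q` with
integrable log-density (i.e. finite KL divergence `KL(P ‖ Q) = ∫ log (dP/dQ) dP`),
for any measurable set `A`, `P(A) + Q(Aᶜ) ≥ (1/2) exp(-KL(P ‖ Q))`. -/
theorem stmt3 {Ω : Type*} [MeasurableSpace Ω] (P Q : Measure Ω)
    [IsProbabilityMeasure P] [IsProbabilityMeasure Q] (hPQ : P ≪ Q)
    (hint : Integrable (fun ω => Real.log (P.rnDeriv Q ω).toReal) P)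
    (A : Set Ω) (hA : MeasurableSet A) :
    (1 / 2) * Real.exp (-(∫ ω, Real.log (P.rnDeriv Q ω).toReal ∂P)) ≤
      (P A).toReal + (Q Aᶜ).toReal := by
  set g : Ω → ℝ := fun ω => ((P.rnDeriv Q ω).toReal)⁻¹ with hgdef
  have hfpos : ∀ᵐ ω ∂P, 0 < (P.rnDeriv Q ω).toReal := by
    filter_upwards [Measure.rnDeriv_pos hPQ, hPQ.ae_le (Measure.rnDeriv_lt_top P Q)]
      with ω h1 h2
    exact ENNReal.toReal_pos h1.ne' h2.ne
  have hgpos : ∀ᵐ ω ∂P, 0 < g ω := hfpos.mono fun ω h => inv_pos.mpr h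
  have hg_meas : Measurable g := (Measure.measurable_rnDeriv P Q).ennreal_toReal.inv
  have hg_nonneg : ∀ᵐ ω ∂P, 0 ≤ g ω := hgpos.mono fun ω h => h.le
  -- lintegral bound
  have hlint : ∀ B : Set Ω, MeasurableSet B →
      ∫⁻ ω in B, ENNReal.ofReal (g ω) ∂P ≤ Q B := by
    intro B hB
    rw [← setLIntegral_rnDeriv_mul hPQ
      (hg_meas.ennreal_ofReal.aemeasurable) hB]
    calc ∫⁻ ω in B, P.rnDeriv Q ω * ENNReal.ofReal (g ω) ∂Q
        ≤ ∫⁻ _ in B, 1 ∂Q := by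
          refine lintegral_mono fun ω => ?_
          exact mul_ofReal_toReal_inv_le_one _
      _ = Q B := by simp
  have hg_int : Integrable g P := by
    refine ⟨hg_meas.aestronglyMeasurable, ?_⟩
    rw [hasFiniteIntegral_iff_ofReal hg_nonneg]
    calc ∫⁻ ω, ENNReal.ofReal (g ω) ∂P
        = ∫⁻ ω in Set.univ, ENNReal.ofReal (g ω) ∂P := by rw [Measure.restrict_univ]
      _ ≤ Q Set.univ := hlint _ MeasurableSet.univ
      _ < ∞ := by simp
  have hsetI : ∀ B : Set Ω, MeasurableSet B → ∫ ω in B, g ω ∂P ≤ (Q B).toReal := by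
    intro B hB
    rw [integral_eq_lintegral_of_nonneg_ae (ae_restrict_of_ae hg_nonneg)
      hg_meas.aestronglyMeasurable.restrict]
    exact ENNReal.toReal_mono (measure_ne_top Q B) (hlint B hB)
  have hlog_eq : (fun ω => Real.log (g ω)) = fun ω => -Real.log (P.rnDeriv Q ω).toReal :=
    funext fun ω => Real.log_inv _
  have hlog_int : Integrable (fun ω => Real.log (g ω)) P := by
    rw [hlog_eq]; exact hint.neg
  have hintlog : ∫ ω, Real.log (g ω) ∂P = -(∫ ω, Real.log (P.rnDeriv Q ω).toReal ∂P) := by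
    rw [hlog_eq, integral_neg]
  set a := (P A).toReal
  set b := (P Aᶜ).toReal
  set s := (Q A).toReal
  set t := (Q Aᶜ).toReal
  have ha : 0 ≤ a := ENNReal.toReal_nonneg
  have hb : 0 ≤ b := ENNReal.toReal_nonneg
  have hs : 0 ≤ s := ENNReal.toReal_nonneg
  have ht : 0 ≤ t := ENNReal.toReal_nonneg
  have hab : a + b = 1 := by
    rw [← ENNReal.toReal_add (measure_ne_top P A) (measure_ne_top P Aᶜ),
      measure_add_measure_compl hA]
    simp
  have hst : s + t = 1 := by
    rw [← ENNReal.toReal_add (measure_ne_top Q A) (measure_ne_top Q Aᶜ),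
      measure_add_measure_compl hA]
    simp
  have has : 0 < a → 0 < s := by
    intro h
    refine ENNReal.toReal_pos (fun h0 => ?_) (measure_ne_top Q A)
    have : P A = 0 := hPQ h0
    simp [a, this] at h
  have hbt : 0 < b → 0 < t := by
    intro h
    refine ENNReal.toReal_pos (fun h0 => ?_) (measure_ne_top Q Aᶜ)
    have : P Aᶜ = 0 := hPQ h0
    simp [b, this] at h
  -- Jensen on A and Aᶜ, with monotonicity of log
  have key : ∀ B : Set Ω, MeasurableSet B →
      ∫ ω in B, Real.log (g ω) ∂P ≤ (P B).toReal * Real.log ((Q B).toReal / (P B).toReal) := by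
    intro B hB
    refine le_trans (jensen_log P hg_int hgpos hlog_int) ?_
    rcases eq_or_ne (P B) 0 with h0 | h0
    · simp [h0]
    have hPB : 0 < (P B).toReal := ENNReal.toReal_pos h0 (measure_ne_top P B)
    have hIB : 0 < ∫ ω in B, g ω ∂P := setIntegral_pos_of_ae_pos h0 hg_int hgpos
    refine mul_le_mul_of_nonneg_left ?_ hPB.le
    exact Real.log_le_log (div_pos hIB hPB) (by gcongr; exact hsetI B hB)
  have hkeyA := key A hA
  have hkeyAc := key Aᶜ hA.compl
  have hsplit : ∫ ω in A, Real.log (g ω) ∂P + ∫ ω in Aᶜ, Real.log (g ω) ∂P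
      = ∫ ω, Real.log (g ω) ∂P := integral_add_compl hA hlog_int
  have hL : -(∫ ω, Real.log (P.rnDeriv Q ω).toReal ∂P)
      ≤ a * Real.log (s / a) + b * Real.log (t / b) := by
    rw [← hintlog, ← hsplit]
    exact add_le_add hkeyA hkeyAc
  have hexp : Real.exp (-(∫ ω, Real.log (P.rnDeriv Q ω).toReal ∂P))
      ≤ 2 * (a + t) := by
    calc Real.exp (-(∫ ω, Real.log (P.rnDeriv Q ω).toReal ∂P))
        ≤ Real.exp (a * Real.log (s / a) + b * Real.log (t / b)) := Real.exp_le_exp.mpr hL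
      _ ≤ 2 * (a + t) := scalarC ha hb hs ht hab hst.le has hbt le_rfl
  linarith
end

section
/- For every d ∈ ℕ, there exists a value function class F over context space X = {1,…,d} and actions A = {0,1}, together with f* ∈ F, such that the value function star number of F satisfies sup_Δ s^val(F, f*, Δ) ≤ 5 while the (strong) policy star number of the induced policy class Π = {π_f : f ∈ F} with respect to π* = π_{f*} is at least d. -/
/-- A sequence `z` of `m` context-action pairs witnesses the value function star
number of `(F, f*)` at scale `Δ`: for each `i` there is `f⁽ⁱ⁾ ∈ F` with
`|f⁽ⁱ⁾(z_i) − f*(z_i)| > Δ` and `∑_{j ≠ i} (f⁽ⁱ⁾(z_j) − f*(z_j))² ≤ Δ²`. -/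
def ValStarWitness {X A : Type*} (F : Set (X → A → ℝ)) (fstar : X → A → ℝ)
    (Δ : ℝ) (m : ℕ) (z : Fin m → X × A) : Prop :=
  ∀ i : Fin m, ∃ f ∈ F,
    Δ < |f (z i).1 (z i).2 - fstar (z i).1 (z i).2| ∧
    ∑ j ∈ Finset.univ.erase i, (f (z j).1 (z j).2 - fstar (z j).1 (z j).2) ^ 2 ≤ Δ ^ 2

/-- A sequence of `m` context-action pairs witnesses the (strong) policy star
number of `(Π, π*)`: for each `i` there is `π⁽ⁱ⁾ ∈ Π` with
`π⁽ⁱ⁾(x⁽ⁱ⁾) = a⁽ⁱ⁾ ≠ π*(x⁽ⁱ⁾)` and `π⁽ⁱ⁾(x⁽ʲ⁾) = π*(x⁽ʲ⁾)` for all `j ≠ i` with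
`x⁽ʲ⁾ ≠ x⁽ⁱ⁾`. -/
def PolStarWitness {X A : Type*} (Pi : Set (X → A)) (pistar : X → A)
    (m : ℕ) (z : Fin m → X × A) : Prop :=
  ∀ i : Fin m, ∃ π ∈ Pi,
    π (z i).1 = (z i).2 ∧ (z i).2 ≠ pistar (z i).1 ∧
    ∀ j : Fin m, j ≠ i → (z j).1 ≠ (z i).1 → π (z j).1 = pistar (z j).1

/-- **Separation between value function star number and policy star number.**
For every `d` there is a class `F` of value functions on contexts `{1,…,d}` with two
actions, and `f* ∈ F` (with induced argmax policies `Pol f` and `π* = Pol f*`), such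
that every value-star witness at any scale `Δ > 0` has length at most `5`, while the
induced policy class admits a policy-star witness of length `d`. -/
theorem stmt7 (d : ℕ) :
    ∃ (F : Set (Fin d → Bool → ℝ)) (fstar : Fin d → Bool → ℝ)
      (Pol : (Fin d → Bool → ℝ) → Fin d → Bool),
      fstar ∈ F ∧
      (∀ f ∈ F, ∀ x a, f x a ≤ f x (Pol f x)) ∧
      (∀ Δ : ℝ, 0 < Δ → ∀ m (z : Fin m → Fin d × Bool),
        ValStarWitness F fstar Δ m z → m ≤ 5) ∧
      (∃ z : Fin d → Fin d × Bool,
        PolStarWitness ((fun f => Pol f) '' F) (Pol fstar) d z) := by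
  classical
  set g : Fin d → Fin d → Bool → ℝ := fun i x a =>
    if x = i then (if a then 1/4 else 1/2) else (if a then 1/2 else 1/4) with hg
  refine ⟨insert (fun _ _ => 0) (Set.range g), (fun _ _ => 0),
    fun f x => if f x false ≤ f x true then true else false,
    Set.mem_insert _ _, ?_, ?_, ?_⟩
  · intro f _ x a
    by_cases h : f x false ≤ f x true
    · cases a <;> simp [h]
    · cases a <;> simp [h, le_of_not_ge h]
  · intro Δ hΔ m z hw
    rcases Nat.eq_zero_or_pos m with hm | hm
    · omega
    obtain ⟨f, hf, hbig, hsum⟩ := hw ⟨0, hm⟩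
    rcases hf with hf | ⟨k, rfl⟩
    · exfalso
      rw [hf] at hbig
      simp at hbig
      linarith
    · have hval : ∀ x a, g k x a = 1/4 ∨ g k x a = 1/2 := by
        intro x a; simp only [hg]; split_ifs <;> simp
      have hΔhalf : Δ < 1/2 := by
        have h2 : |g k (z ⟨0, hm⟩).1 (z ⟨0, hm⟩).2| ≤ 1/2 := by
          rcases hval (z ⟨0, hm⟩).1 (z ⟨0, hm⟩).2 with h | h <;> rw [h] <;>
            norm_num [abs_le]
        simp only [sub_zero] at hbig
        linarith
      have hcard : (Finset.univ.erase (⟨0, hm⟩ : Fin m)).card = m - 1 := by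
        rw [Finset.card_erase_of_mem (Finset.mem_univ _), Finset.card_univ,
          Fintype.card_fin]
      have hterm : ∀ j ∈ Finset.univ.erase (⟨0, hm⟩ : Fin m),
          (1/16 : ℝ) ≤ (g k (z j).1 (z j).2 - (fun _ _ => (0:ℝ)) (z j).1 (z j).2) ^ 2 := by
        intro j _
        rcases hval (z j).1 (z j).2 with h | h <;> simp [h] <;> norm_num
      have hlow : ((m - 1 : ℕ) : ℝ) * (1/16) ≤ Δ ^ 2 := by
        calc ((m - 1 : ℕ) : ℝ) * (1/16)
            = ∑ _j ∈ Finset.univ.erase (⟨0, hm⟩ : Fin m), (1/16 : ℝ) := by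
              rw [Finset.sum_const, hcard, nsmul_eq_mul]
          _ ≤ ∑ j ∈ Finset.univ.erase (⟨0, hm⟩ : Fin m),
              (g k (z j).1 (z j).2 - (fun _ _ => (0:ℝ)) (z j).1 (z j).2) ^ 2 :=
              Finset.sum_le_sum hterm
          _ ≤ Δ ^ 2 := hsum
      have hΔsq : Δ ^ 2 < 1/4 := by nlinarith
      have : ((m - 1 : ℕ) : ℝ) < 4 := by linarith
      have : (m - 1 : ℕ) < 4 := by exact_mod_cast this
      omega
  · refine ⟨fun i => (i, false), fun i => ?_⟩
    refine ⟨_, ⟨g i, Set.mem_insert_iff.mpr (Or.inr ⟨i, rfl⟩), rfl⟩, ?_, ?_, ?_⟩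
    · simp only [hg]
      norm_num
    · simp only [hg]
      norm_num
    · intro j _ hj
      simp only [hg]
      norm_num [hj]
end

section
/- For every d ∈ ℕ and Δ ∈ (0,1), there exists a function class F over X = {1,…,d} and A = {0,1}, and f* ∈ F, such that the value function star number satisfies sup_{Δ'} s^val(F, f*, Δ') ≤ 2 while the value function eluder dimension satisfies e^val(F, f*, Δ/2) ≥ d. -/
/-- A sequence `z` of `m` context-action pairs witnesses the value function eluder
dimension of `(F, f*)` at scale `Δ` (constraint sum over `j < i`). -/
def ValEluderWitness {X A : Type*} (F : Set (X → A → ℝ)) (fstar : X → A → ℝ)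
    (Δ : ℝ) (m : ℕ) (z : Fin m → X × A) : Prop :=
  ∀ i : Fin m, ∃ f ∈ F,
    Δ < |f (z i).1 (z i).2 - fstar (z i).1 (z i).2| ∧
    ∑ j ∈ Finset.univ.filter (fun j : Fin m => j < i),
      (f (z j).1 (z j).2 - fstar (z j).1 (z j).2) ^ 2 ≤ Δ ^ 2

/-- **Separation between star number and eluder dimension.** For every `d ∈ ℕ` and
`Δ ∈ (0,1)` there is a class `F` on contexts `{1,…,d}` with two actions and
`f* ∈ F` such that every value-star witness (at any positive scale) has length at
most `2`, while there is an eluder witness of length `d` at some scale `Δ' > Δ/2`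
(so the eluder dimension at scale `Δ/2` is at least `d`). -/
theorem stmt8 (d : ℕ) (Δ : ℝ) (hΔ : Δ ∈ Set.Ioo (0 : ℝ) 1) :
    ∃ (F : Set (Fin d → Bool → ℝ)) (fstar : Fin d → Bool → ℝ),
      fstar ∈ F ∧
      (∀ Δ' : ℝ, 0 < Δ' → ∀ m (z : Fin m → Fin d × Bool),
        ValStarWitness F fstar Δ' m z → m ≤ 2) ∧
      (∃ Δ' : ℝ, Δ / 2 < Δ' ∧ ∃ z : Fin d → Fin d × Bool,
        ValEluderWitness F fstar Δ' d z) := by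
  obtain ⟨hΔ0, hΔ1⟩ := hΔ
  set fk : Fin d → Fin d → Bool → ℝ :=
    fun k x _ => if k.val ≤ x.val then 2 * Δ else Δ * (1 / 2) ^ k.val with hfk
  have hnonneg : ∀ k x b, 0 ≤ fk k x b := by
    intro k x b
    simp only [hfk]
    split <;> positivity
  have hmono : ∀ (k x y : Fin d) (b b' : Bool), x.val ≤ y.val → fk k x b ≤ fk k y b' := by
    intro k x y b b' hxy
    simp only [hfk]
    rcases le_or_gt k.val x.val with h1 | h1
    · rw [if_pos h1, if_pos (le_trans h1 hxy)]
    · rw [if_neg (not_le.2 h1)]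
      split
      · nlinarith [pow_le_one₀ (by norm_num : (0:ℝ) ≤ 1/2) (by norm_num : (1:ℝ)/2 ≤ 1) (n := k.val)]
      · exact le_refl _
  refine ⟨insert (fun _ _ => 0) (Set.range fk), (fun _ _ => 0), Set.mem_insert _ _, ?_, ?_⟩
  · -- star bound
    intro Δ' hΔ' m z hw
    by_contra hm
    push_neg at hm
    have key : ∀ i j : Fin m, j ≠ i → (z j).1.val < (z i).1.val := by
      intro i j hji
      obtain ⟨f, hfF, hfi, hsum⟩ := hw i
      rcases hfF with hf | hf
      · rw [hf] at hfi; simp at hfi; linarith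
      · obtain ⟨k, rfl⟩ := hf
        have hmem : j ∈ Finset.univ.erase i := Finset.mem_erase.2 ⟨hji, Finset.mem_univ j⟩
        have hj : (fk k (z j).1 (z j).2 - 0) ^ 2 ≤ Δ' ^ 2 :=
          le_trans (Finset.single_le_sum
            (f := fun t : Fin m => (fk k (z t).1 (z t).2 - (fun (_ : Fin d) (_ : Bool) => (0:ℝ)) (z t).1 (z t).2) ^ 2)
            (fun t _ => sq_nonneg _) hmem) hsum
        simp only [sub_zero] at hfi hj
        rw [abs_of_nonneg (hnonneg k (z i).1 (z i).2)] at hfi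
        have hsq : Δ' ^ 2 < (fk k (z i).1 (z i).2) ^ 2 :=
          pow_lt_pow_left₀ hfi hΔ'.le (by norm_num)
        by_contra hle
        push_neg at hle
        have := hmono k (z i).1 (z j).1 (z i).2 (z j).2 hle
        nlinarith [hnonneg k (z i).1 (z i).2]
    have h01 := key ⟨0, by omega⟩ ⟨1, by omega⟩ (by simp [Fin.ext_iff])
    have h10 := key ⟨1, by omega⟩ ⟨0, by omega⟩ (by simp [Fin.ext_iff])
    omega
  · -- eluder witness
    refine ⟨Δ, by linarith, fun i => (i, true), ?_⟩
    intro i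
    refine ⟨fk i, Set.mem_insert_of_mem _ ⟨i, rfl⟩, ?_, ?_⟩
    · have : fk i i true = 2 * Δ := by simp [hfk]
      rw [this, sub_zero, abs_of_nonneg (by linarith)]
      linarith
    · have hval : ∀ j : Fin d, j < i → fk i j true = Δ * (1 / 2) ^ i.val := by
        intro j hj
        have h : ¬ i.val ≤ j.val := Nat.not_le.2 hj
        simp only [hfk]
        rw [if_neg h]
      have hcard : (Finset.univ.filter (fun j : Fin d => j < i)).card = i.val := by
        have : Finset.univ.filter (fun j : Fin d => j < i) = Finset.Iio i := by
          ext j; simp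
        rw [this, Fin.card_Iio]
      have h2 : (Δ * (1 / 2) ^ i.val) ^ 2 = Δ ^ 2 * (1 / 4 : ℝ) ^ i.val := by
        rw [mul_pow, ← pow_mul, mul_comm i.val 2, pow_mul]
        norm_num
      have h1 : (i.val : ℝ) ≤ 4 ^ i.val := by
        calc (i.val : ℝ) ≤ 2 ^ i.val := by exact_mod_cast (Nat.lt_two_pow_self (n := i.val)).le
          _ ≤ 4 ^ i.val := by gcongr; norm_num
      have hkey : (4 : ℝ) ^ i.val * (1 / 4 : ℝ) ^ i.val = 1 := by
        rw [← mul_pow]; norm_num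
      calc ∑ j ∈ Finset.univ.filter (fun j : Fin d => j < i),
            (fk i ((j : Fin d), true).1 ((j : Fin d), true).2 - (fun (_ : Fin d) (_ : Bool) => (0:ℝ)) ((j : Fin d), true).1 ((j : Fin d), true).2) ^ 2
          = ∑ j ∈ Finset.univ.filter (fun j : Fin d => j < i),
            (Δ * (1 / 2) ^ i.val) ^ 2 := by
            apply Finset.sum_congr rfl
            intro j hj
            rw [hval j (Finset.mem_filter.1 hj).2]
            norm_num
        _ = (i.val : ℝ) * (Δ ^ 2 * (1 / 4 : ℝ) ^ i.val) := by
            rw [Finset.sum_const, hcard, h2]; simp [nsmul_eq_mul]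
        _ ≤ (4 : ℝ) ^ i.val * (Δ ^ 2 * (1 / 4 : ℝ) ^ i.val) := by
            apply mul_le_mul_of_nonneg_right h1 (by positivity)
        _ = Δ ^ 2 := by
            rw [← mul_assoc, mul_comm ((4:ℝ) ^ i.val) (Δ ^ 2), mul_assoc, hkey, mul_one]
end

section
/- Let Z be a set, G a class of functions Z → [0,1], and fix ζ > 0, ε > 0. For any finite sequence S = (z₁,…,z_n) of points of Z, let G_S(ε) = { g ∈ G : ∑_{j=1}^n g(z_j)² ≤ ε² } and w(z) = sup_{g ∈ G_S(ε)} g(z). Let d = š(G, ζ) denote the largest m such that there exist points z⁽¹⁾,…,z⁽ᵐ⁾ and functions g⁽¹⁾,…,g⁽ᵐ⁾ ∈ G with g⁽ⁱ⁾(z⁽ⁱ⁾) > ζ and ∑_{j≠i} g⁽ⁱ⁾(z⁽ʲ⁾)² ≤ ζ² for all i. Then ∑_{j=1}^n 1{ w(z_j) > ζ } ≤ (ε²/ζ²)·d² + (ε²/ζ²)·d + d + 1. -/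
open scoped Classical

/-- **Star number controls empirical disagreement (Lemma `lem:star`).** Let `G` be a
class of `[0,1]`-valued functions on `Z`, `ζ, ε > 0`, and let `d` bound the
fixed-scale star number `š(G, ζ)` (i.e. every sequence `w⁽¹⁾,…,w⁽ᵐ⁾` admitting
functions `g⁽ⁱ⁾ ∈ G` with `g⁽ⁱ⁾(w_i) > ζ` and `∑_{j ≠ i} g⁽ⁱ⁾(w_j)² ≤ ζ²` has
`m ≤ d`). Then for any sequence `z₁,…,z_n`, the number of indices `j` at which the
width `w(z_j) = sup_{g ∈ G_S(ε)} g(z_j)` exceeds `ζ` — equivalently, at which some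
`g ∈ G` with `∑_k g(z_k)² ≤ ε²` has `g(z_j) > ζ` — is at most
`(ε²/ζ²)·d² + (ε²/ζ²)·d + d + 1`. -/
theorem stmt10 {Z : Type*} (G : Set (Z → ℝ))
    (hG : ∀ g ∈ G, ∀ z, g z ∈ Set.Icc (0 : ℝ) 1)
    (ζ ε : ℝ) (hζ : 0 < ζ) (hε : 0 < ε)
    (d : ℕ)
    (hd : ∀ (m : ℕ) (w : Fin m → Z),
      (∀ i : Fin m, ∃ g ∈ G, ζ < g (w i) ∧
        ∑ j ∈ Finset.univ.erase i, (g (w j)) ^ 2 ≤ ζ ^ 2) → m ≤ d)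
    (n : ℕ) (z : Fin n → Z) :
    ((Finset.univ.filter fun j : Fin n =>
        ∃ g ∈ G, (∑ k, (g (z k)) ^ 2 ≤ ε ^ 2) ∧ ζ < g (z j)).card : ℝ)
      ≤ ε ^ 2 / ζ ^ 2 * d ^ 2 + ε ^ 2 / ζ ^ 2 * d + d + 1 := by
  classical
  set B : Finset (Fin n) := Finset.univ.filter fun j : Fin n =>
      ∃ g ∈ G, (∑ k, (g (z k)) ^ 2 ≤ ε ^ 2) ∧ ζ < g (z j) with hBdef
  have hBmem : ∀ j ∈ B, ∃ g ∈ G, (∑ k, (g (z k)) ^ 2 ≤ ε ^ 2) ∧ ζ < g (z j) := by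
    intro j hj
    simpa [hBdef, Finset.mem_filter] using hj
  choose! g hgG hgsum hgj using hBmem
  set N := B.card with hN
  have hz2 : (0:ℝ) < ζ ^ 2 := by positivity
  have hnonneg : (0:ℝ) ≤ ε ^ 2 / ζ ^ 2 * d ^ 2 + ε ^ 2 / ζ ^ 2 * d := by positivity
  have hdnonneg : (0:ℝ) ≤ (d:ℝ) := by positivity
  by_cases hsmall : N ≤ d + 1
  · have hc : (N : ℝ) ≤ (d:ℝ) + 1 := by exact_mod_cast hsmall
    linarith
  push_neg at hsmall
  -- d ≥ 1
  have hd1 : 1 ≤ d := by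
    obtain ⟨j, hj⟩ : B.Nonempty := Finset.card_pos.mp (by omega)
    have h1 := hd 1 (fun _ => z j) (fun i => ⟨g j, hgG j hj, hgj j hj, by
      have he : (Finset.univ.erase i) = (∅ : Finset (Fin 1)) := by
        ext k; simp [Subsingleton.elim k i]
      rw [he, Finset.sum_empty]; positivity⟩)
    omega
  -- key: every (d+1)-subset of B fails the star condition somewhere
  have key : ∀ T ⊆ B, T.card = d + 1 →
      ∃ i ∈ T, ζ ^ 2 < ∑ j ∈ T.erase i, (g i (z j)) ^ 2 := by
    intro T hTB hT
    by_contra hcon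
    push_neg at hcon
    have hmain : ∀ i : Fin (d+1), ∃ g' ∈ G,
        ζ < g' (z ((T.orderIsoOfFin hT i) : Fin n)) ∧
        ∑ j ∈ Finset.univ.erase i,
          (g' (z ((T.orderIsoOfFin hT j) : Fin n))) ^ 2 ≤ ζ ^ 2 := by
      intro i
      set e := T.orderIsoOfFin hT with he
      have hei : ((e i : Fin n)) ∈ T := (e i).2
      refine ⟨g (e i), hgG _ (hTB hei), hgj _ (hTB hei), ?_⟩
      have himg : (Finset.univ.erase i).image (fun j => ((e j : Fin n)))
          = T.erase (e i) := by
        ext x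
        constructor
        · intro hx
          obtain ⟨j, hj, rfl⟩ := Finset.mem_image.mp hx
          have hjne : j ≠ i := (Finset.mem_erase.mp hj).1
          exact Finset.mem_erase.mpr
            ⟨fun h => hjne (e.injective (Subtype.ext h)), (e j).2⟩
        · intro hx
          obtain ⟨hx1, hx2⟩ := Finset.mem_erase.mp hx
          refine Finset.mem_image.mpr ⟨e.symm ⟨x, hx2⟩, ?_, ?_⟩
          · refine Finset.mem_erase.mpr ⟨?_, Finset.mem_univ _⟩
            intro h
            apply hx1
            have h2 : (⟨x, hx2⟩ : {y // y ∈ T}) = e i := by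
              rw [← h]
              simp
            exact congrArg Subtype.val h2
          · simp
      have hsum : ∑ j ∈ Finset.univ.erase i, (g (e i) (z ((e j : Fin n)))) ^ 2
          = ∑ x ∈ T.erase (e i), (g (e i) (z x)) ^ 2 := by
        rw [← himg, Finset.sum_image (fun a _ b _ h => e.injective (Subtype.ext h))]
      rw [hsum]
      exact hcon _ hei
    have := hd (d+1) (fun i => z ((T.orderIsoOfFin hT i) : Fin n)) hmain
    omega
  set P := B.powersetCard (d+1) with hP
  have hPmem : ∀ T ∈ P, T ⊆ B ∧ T.card = d + 1 := fun T hT => Finset.mem_powersetCard.mp hT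
  -- Step A: lower bound
  have stepA : (N.choose (d+1) : ℝ) * ζ ^ 2 ≤
      ∑ T ∈ P, ∑ i ∈ T, ∑ j ∈ T.erase i, (g i (z j)) ^ 2 := by
    have hcard : P.card = N.choose (d+1) := by
      rw [hP, Finset.card_powersetCard]
    calc (N.choose (d+1) : ℝ) * ζ ^ 2 = ∑ _T ∈ P, ζ ^ 2 := by
          rw [Finset.sum_const, hcard, nsmul_eq_mul]
      _ ≤ ∑ T ∈ P, ∑ i ∈ T, ∑ j ∈ T.erase i, (g i (z j)) ^ 2 := by
          apply Finset.sum_le_sum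
          intro T hT
          obtain ⟨hTB, hTc⟩ := hPmem T hT
          obtain ⟨i0, hi0, hlt⟩ := key T hTB hTc
          have hle : ∑ j ∈ T.erase i0, (g i0 (z j)) ^ 2
              ≤ ∑ i ∈ T, ∑ j ∈ T.erase i, (g i (z j)) ^ 2 :=
            Finset.single_le_sum (f := fun i => ∑ j ∈ T.erase i, (g i (z j)) ^ 2)
              (fun i _ => Finset.sum_nonneg fun j _ => by positivity) hi0
          linarith
  -- swap the order of summation
  have swap : ∑ T ∈ P, ∑ i ∈ T, ∑ j ∈ T.erase i, (g i (z j)) ^ 2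
      = ∑ i ∈ B, ∑ j ∈ B.erase i,
          ((P.filter fun T => i ∈ T ∧ j ∈ T).card : ℝ) * (g i (z j)) ^ 2 := by
    have h1 : ∀ T ∈ P, ∑ i ∈ T, ∑ j ∈ T.erase i, (g i (z j)) ^ 2
        = ∑ i ∈ B, ∑ j ∈ B.erase i,
            (if i ∈ T ∧ j ∈ T then (g i (z j)) ^ 2 else 0) := by
      intro T hT
      obtain ⟨hTB, _⟩ := hPmem T hT
      have hin : ∀ i, ∑ j ∈ B.erase i, (if i ∈ T ∧ j ∈ T then (g i (z j)) ^ 2 else 0)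
          = if i ∈ T then ∑ j ∈ T.erase i, (g i (z j)) ^ 2 else 0 := by
        intro i
        by_cases hiT : i ∈ T
        · simp only [hiT, true_and, if_true]
          have hfe : (B.erase i).filter (fun j => j ∈ T) = T.erase i := by
            ext x
            simp only [Finset.mem_filter, Finset.mem_erase]
            exact ⟨fun h => ⟨h.1.1, h.2⟩, fun h => ⟨⟨h.1, hTB h.2⟩, h.2⟩⟩
          rw [← Finset.sum_filter, hfe]
        · simp [hiT]
      rw [Finset.sum_congr rfl (fun i _ => hin i), ← Finset.sum_filter,
        Finset.filter_mem_eq_inter, Finset.inter_eq_right.mpr hTB]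
    rw [Finset.sum_congr rfl h1, Finset.sum_comm]
    refine Finset.sum_congr rfl fun i _ => ?_
    rw [Finset.sum_comm]
    refine Finset.sum_congr rfl fun j _ => ?_
    rw [← Finset.sum_filter, Finset.sum_const, nsmul_eq_mul]
  -- count the number of (d+1)-subsets containing two fixed points
  have hcount : ∀ i ∈ B, ∀ j ∈ B.erase i,
      (P.filter fun T => i ∈ T ∧ j ∈ T).card ≤ (N-2).choose (d-1) := by
    intro i hi j hj
    have hji : j ≠ i := (Finset.mem_erase.mp hj).1
    have hjB : j ∈ B := (Finset.mem_erase.mp hj).2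
    have hjBE : j ∈ B.erase i := hj
    have htarget : (((B.erase i).erase j).powersetCard (d-1)).card = (N-2).choose (d-1) := by
      rw [Finset.card_powersetCard, Finset.card_erase_of_mem hjBE,
        Finset.card_erase_of_mem hi]
      have hcc : B.card - 1 - 1 = N - 2 := by omega
      rw [hcc]

    rw [← htarget]
    apply Finset.card_le_card_of_injOn (fun T => (T.erase i).erase j)
    · intro T hT
      simp only [Finset.mem_coe, Finset.mem_filter] at hT
      obtain ⟨hTP, hiT, hjT⟩ := hT
      obtain ⟨hTB, hTc⟩ := hPmem T hTP
      have hjTE : j ∈ T.erase i := Finset.mem_erase.mpr ⟨hji, hjT⟩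
      refine Finset.mem_powersetCard.mpr ⟨?_, ?_⟩
      · exact Finset.erase_subset_erase _ (Finset.erase_subset_erase _ hTB)
      · rw [Finset.card_erase_of_mem hjTE, Finset.card_erase_of_mem hiT, hTc]
        omega
    · intro T1 hT1 T2 hT2 hEq
      simp only [Finset.coe_filter, Set.mem_setOf_eq] at hT1 hT2
      obtain ⟨_, hiT1, hjT1⟩ := hT1
      obtain ⟨_, hiT2, hjT2⟩ := hT2
      have r1 : ∀ (T : Finset (Fin n)), i ∈ T → j ∈ T →
          insert i (insert j ((T.erase i).erase j)) = T := by
        intro T hiT hjT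
        rw [Finset.insert_erase (Finset.mem_erase.mpr ⟨hji, hjT⟩),
          Finset.insert_erase hiT]
      rw [← r1 T1 hiT1 hjT1, ← r1 T2 hiT2 hjT2]
      exact congrArg (fun S => insert i (insert j S)) hEq
  -- Step B: upper bound
  have stepB : ∑ i ∈ B, ∑ j ∈ B.erase i,
      ((P.filter fun T => i ∈ T ∧ j ∈ T).card : ℝ) * (g i (z j)) ^ 2
      ≤ ((N-2).choose (d-1) : ℝ) * ((N:ℝ) * ε ^ 2) := by
    calc ∑ i ∈ B, ∑ j ∈ B.erase i,
          ((P.filter fun T => i ∈ T ∧ j ∈ T).card : ℝ) * (g i (z j)) ^ 2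
        ≤ ∑ i ∈ B, ∑ j ∈ B.erase i, ((N-2).choose (d-1) : ℝ) * (g i (z j)) ^ 2 := by
          apply Finset.sum_le_sum
          intro i hi
          apply Finset.sum_le_sum
          intro j hj
          apply mul_le_mul_of_nonneg_right _ (by positivity)
          exact_mod_cast hcount i hi j hj
      _ = ((N-2).choose (d-1) : ℝ) * ∑ i ∈ B, ∑ j ∈ B.erase i, (g i (z j)) ^ 2 := by
          rw [Finset.mul_sum]
          exact Finset.sum_congr rfl fun i _ => by rw [Finset.mul_sum]
      _ ≤ ((N-2).choose (d-1) : ℝ) * ((N:ℝ) * ε ^ 2) := by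
          apply mul_le_mul_of_nonneg_left _ (by positivity)
          calc ∑ i ∈ B, ∑ j ∈ B.erase i, (g i (z j)) ^ 2 ≤ ∑ _i ∈ B, ε ^ 2 := by
                apply Finset.sum_le_sum
                intro i hi
                have hle := Finset.sum_le_sum_of_subset_of_nonneg
                  (Finset.subset_univ (B.erase i))
                  (fun k _ _ => by positivity : ∀ k ∈ Finset.univ,
                    k ∉ B.erase i → (0:ℝ) ≤ (g i (z k)) ^ 2)
                exact hle.trans (hgsum i hi)
            _ = (N:ℝ) * ε ^ 2 := by rw [Finset.sum_const, nsmul_eq_mul]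
  have hmain : (N.choose (d+1) : ℝ) * ζ ^ 2 ≤ ((N-2).choose (d-1) : ℝ) * ((N:ℝ) * ε ^ 2) :=
    (stepA.trans_eq swap).trans stepB
  -- binomial identity
  have e1 : N - 1 + 1 = N := by omega
  have e2 : N - 2 + 1 = N - 1 := by omega
  have e3 : d - 1 + 1 = d := by omega
  have id1 : N * ((N-1).choose d) = N.choose (d+1) * (d+1) := by
    have h := Nat.add_one_mul_choose_eq (N-1) d
    rwa [e1] at h
  have id2 : (N-1) * ((N-2).choose (d-1)) = (N-1).choose d * d := by
    have h := Nat.add_one_mul_choose_eq (N-2) (d-1)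
    rwa [e2, e3] at h
  have iden : (d+1) * d * (N.choose (d+1)) = N * ((N-1) * ((N-2).choose (d-1))) := by
    calc (d+1) * d * (N.choose (d+1)) = d * (N.choose (d+1) * (d+1)) := by ring
      _ = d * (N * ((N-1).choose d)) := by rw [id1]
      _ = N * ((N-1).choose d * d) := by ring
      _ = N * ((N-1) * ((N-2).choose (d-1))) := by rw [id2]
  have hA1 : 1 ≤ (N-2).choose (d-1) := Nat.choose_pos (by omega)
  have hAR : (1:ℝ) ≤ ((N-2).choose (d-1) : ℝ) := by exact_mod_cast hA1
  have hNR : ((d:ℝ) + 2) ≤ (N:ℝ) := by exact_mod_cast (show d + 2 ≤ N by omega)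
  have hidenR : ((d:ℝ)+1) * (d:ℝ) * (N.choose (d+1) : ℝ)
      = (N:ℝ) * (((N:ℝ)-1) * ((N-2).choose (d-1) : ℝ)) := by
    have h := congrArg (fun t : ℕ => (t : ℝ)) iden
    push_cast [Nat.cast_sub (show 1 ≤ N by omega)] at h
    convert h using 2 <;> push_cast <;> ring
  have hNpos : (0:ℝ) < (N:ℝ) := by linarith
  have hApos : (0:ℝ) < ((N-2).choose (d-1) : ℝ) := by linarith
  have hstep : ((N:ℝ)-1) * ζ ^ 2 ≤ (d:ℝ) * ((d:ℝ)+1) * ε ^ 2 := by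
    have h1 : ((d:ℝ)+1) * (d:ℝ) * ((N.choose (d+1) : ℝ) * ζ ^ 2)
        ≤ ((d:ℝ)+1) * (d:ℝ) * (((N-2).choose (d-1) : ℝ) * ((N:ℝ) * ε ^ 2)) :=
      mul_le_mul_of_nonneg_left hmain (by positivity)
    have h2 : ((N:ℝ) * ((N-2).choose (d-1) : ℝ)) * (((N:ℝ)-1) * ζ ^ 2)
        ≤ ((N:ℝ) * ((N-2).choose (d-1) : ℝ)) * ((d:ℝ) * ((d:ℝ)+1) * ε ^ 2) := by
      nlinarith [h1, hidenR]
    exact le_of_mul_le_mul_left h2 (mul_pos hNpos hApos)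
  have h3 : ((N:ℝ) - 1) ≤ (d:ℝ) * ((d:ℝ)+1) * ε ^ 2 / ζ ^ 2 := by
    rw [le_div_iff₀ hz2]
    exact hstep
  have h4 : (d:ℝ) * ((d:ℝ)+1) * ε ^ 2 / ζ ^ 2 = ε ^ 2 / ζ ^ 2 * (d:ℝ) ^ 2 + ε ^ 2 / ζ ^ 2 * (d:ℝ) := by
    field_simp
  linarith
end

section
/- Let Z be a set, G a class of functions Z → [0,1], fix ζ > 0 and a constant β > 0. Given a sequence z₁, z₂, …, z_T, for each t define the width w_t(z) = sup{ g(z) : g ∈ G, ∑_{j<t} g(z_j)² ≤ 4β² }. Let ě(G, ζ) be the eluder dimension at scale ζ: the longest sequence z⁽¹⁾,…,z⁽ᵐ⁾ such that for each i there is g⁽ⁱ⁾ ∈ G with g⁽ⁱ⁾(z⁽ⁱ⁾) > ζ and ∑_{j<i} g⁽ⁱ⁾(z⁽ʲ⁾)² ≤ ζ². Then ∑_{t=1}^T 1{ w_t(z_t) > ζ } ≤ (4β²/ζ² + 1)·ě(G, ζ). -/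
open scoped Classical

namespace EluderAux

noncomputable def pickBin (c : ℕ → ℕ → ℝ) (τ : ℝ) (t : ℕ) (f : ℕ → Finset ℕ) : ℕ :=
  if h : ∃ k, ∑ j ∈ f k, c t j ≤ τ then Nat.find h else 0

noncomputable def bins (c : ℕ → ℕ → ℝ) (τ : ℝ) (P : ℕ → Prop) : ℕ → ℕ → Finset ℕ
  | 0 => fun _ => ∅
  | (t+1) => fun k =>
      if P t ∧ k = pickBin c τ t (bins c τ P t) then insert t (bins c τ P t k)
      else bins c τ P t k

lemma mem_bins (c : ℕ → ℕ → ℝ) (τ : ℝ) (P : ℕ → Prop) {j t k : ℕ} :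
    j ∈ bins c τ P t k ↔ j < t ∧ P j ∧ k = pickBin c τ j (bins c τ P j) := by
  induction t with
  | zero => simp [bins]
  | succ t ih =>
    simp only [bins]
    by_cases h : P t ∧ k = pickBin c τ t (bins c τ P t)
    · simp only [if_pos h, Finset.mem_insert, ih]
      constructor
      · rintro (rfl | ⟨hj, hP, hk⟩)
        · exact ⟨Nat.lt_succ_self j, h.1, h.2⟩
        · exact ⟨hj.trans (Nat.lt_succ_self t), hP, hk⟩
      · rintro ⟨hj, hP, hk⟩
        rcases Nat.lt_succ_iff_lt_or_eq.mp hj with hj' | rfl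
        · exact Or.inr ⟨hj', hP, hk⟩
        · exact Or.inl rfl
    · simp only [if_neg h, ih]
      constructor
      · rintro ⟨hj, hP, hk⟩; exact ⟨hj.trans (Nat.lt_succ_self t), hP, hk⟩
      · rintro ⟨hj, hP, hk⟩
        rcases Nat.lt_succ_iff_lt_or_eq.mp hj with hj' | rfl
        · exact ⟨hj', hP, hk⟩
        · exact absurd ⟨hP, hk⟩ h
lemma bins_subset_range (c : ℕ → ℕ → ℝ) (τ : ℝ) (P : ℕ → Prop) (t k : ℕ) :
    bins c τ P t k ⊆ Finset.range t := fun j hj =>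
  Finset.mem_range.mpr ((mem_bins c τ P).mp hj).1

lemma bins_disjoint (c : ℕ → ℕ → ℝ) (τ : ℝ) (P : ℕ → Prop) (t : ℕ) {k k' : ℕ}
    (h : k ≠ k') : Disjoint (bins c τ P t k) (bins c τ P t k') := by
  rw [Finset.disjoint_left]
  intro j hj hj'
  exact h (((mem_bins c τ P).mp hj).2.2.trans ((mem_bins c τ P).mp hj').2.2.symm)

lemma exists_sum_le (c : ℕ → ℕ → ℝ) {τ : ℝ} (hτ : 0 ≤ τ) (P : ℕ → Prop) (t : ℕ) :
    ∃ k, ∑ j ∈ bins c τ P t k, c t j ≤ τ := by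
  obtain ⟨k, hk⟩ := Infinite.exists_notMem_finset
    ((Finset.range t).image fun j => pickBin c τ j (bins c τ P j))
  refine ⟨k, ?_⟩
  have : bins c τ P t k = ∅ := by
    rw [Finset.eq_empty_iff_forall_notMem]
    intro j hj
    obtain ⟨hj1, _, hj3⟩ := (mem_bins c τ P).mp hj
    exact hk (Finset.mem_image.mpr ⟨j, Finset.mem_range.mpr hj1, hj3.symm⟩)
  simp [this, hτ]

lemma pickBin_spec (c : ℕ → ℕ → ℝ) {τ : ℝ} (hτ : 0 ≤ τ) (P : ℕ → Prop) (t : ℕ) :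
    ∑ j ∈ bins c τ P t (pickBin c τ t (bins c τ P t)), c t j ≤ τ := by
  rw [pickBin, dif_pos (exists_sum_le c hτ P t)]
  exact Nat.find_spec (exists_sum_le c hτ P t)

lemma pickBin_lt (c : ℕ → ℕ → ℝ) {τ : ℝ} (hτ : 0 < τ) (P : ℕ → Prop) (t : ℕ)
    (hc : ∀ j, 0 ≤ c t j) {B : ℝ} (hsum : ∑ j ∈ Finset.range t, c t j ≤ B)
    {K : ℕ} (hK : B < K * τ) : pickBin c τ t (bins c τ P t) < K := by
  have hex := exists_sum_le c hτ.le P t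
  rw [pickBin, dif_pos hex]
  by_contra hge
  push_neg at hge
  have hall : ∀ k < K, τ < ∑ j ∈ bins c τ P t k, c t j := fun k hk =>
    not_le.mp (Nat.find_min hex (lt_of_lt_of_le hk hge))
  have hdisj : (↑(Finset.range K) : Set ℕ).PairwiseDisjoint (bins c τ P t) := by
    intro a _ b _ hab
    exact bins_disjoint c τ P t hab
  have hBnn : (0:ℝ) ≤ B :=
    le_trans (Finset.sum_nonneg fun j _ => hc j) hsum
  have hKpos : 0 < K := by
    by_contra h0
    push_neg at h0
    interval_cases K
    simp at hK
    linarith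
  have h1 : (K : ℝ) * τ < ∑ k ∈ Finset.range K, ∑ j ∈ bins c τ P t k, c t j := by
    calc (K : ℝ) * τ = ∑ _k ∈ Finset.range K, τ := by
          rw [Finset.sum_const, Finset.card_range, nsmul_eq_mul]
      _ < ∑ k ∈ Finset.range K, ∑ j ∈ bins c τ P t k, c t j := by
          apply Finset.sum_lt_sum_of_nonempty
          · exact ⟨0, Finset.mem_range.mpr hKpos⟩
          · intro k hk; exact hall k (Finset.mem_range.mp hk)
  have h2 : ∑ k ∈ Finset.range K, ∑ j ∈ bins c τ P t k, c t j
      = ∑ j ∈ (Finset.range K).biUnion (bins c τ P t), c t j :=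
    (Finset.sum_biUnion hdisj).symm
  have h3 : ∑ j ∈ (Finset.range K).biUnion (bins c τ P t), c t j
      ≤ ∑ j ∈ Finset.range t, c t j := by
    apply Finset.sum_le_sum_of_subset_of_nonneg
    · intro j hj
      obtain ⟨k, _, hjk⟩ := Finset.mem_biUnion.mp hj
      exact bins_subset_range c τ P t k hjk
    · intro j _ _; exact hc j
  linarith

lemma bins_filter (c : ℕ → ℕ → ℝ) (τ : ℝ) (P : ℕ → Prop) {t T k : ℕ} (h : t ≤ T) :
    (bins c τ P T k).filter (· < t) = bins c τ P t k := by
  ext j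
  simp only [Finset.mem_filter, mem_bins]
  constructor
  · rintro ⟨⟨_, hP, hk⟩, hj⟩; exact ⟨hj, hP, hk⟩
  · rintro ⟨hj, hP, hk⟩; exact ⟨⟨hj.trans_le h, hP, hk⟩, hj⟩

lemma mem_bins_self (c : ℕ → ℕ → ℝ) (τ : ℝ) (P : ℕ → Prop) {t T : ℕ} (ht : t < T)
    (hP : P t) : t ∈ bins c τ P T (pickBin c τ t (bins c τ P t)) :=
  (mem_bins c τ P).mpr ⟨ht, hP, rfl⟩

end EluderAux

/-- **Eluder dimension controls the number of large widths (Lemma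
`lem:eluder_indicator_bound`).** Let `G` be a class of `[0,1]`-valued functions on
`Z`, `ζ, β > 0`, and let `e` bound the fixed-scale eluder dimension `ě(G, ζ)`
(every sequence `w⁽¹⁾,…,w⁽ᵐ⁾` admitting `g⁽ⁱ⁾ ∈ G` with `g⁽ⁱ⁾(w_i) > ζ` and
`∑_{j<i} g⁽ⁱ⁾(w_j)² ≤ ζ²` has `m ≤ e`). Then along any sequence `z₁,…,z_T`, the
number of rounds `t` at which the width
`w_t(z_t) = sup{g(z_t) : g ∈ G, ∑_{j<t} g(z_j)² ≤ 4β²}` exceeds `ζ` is at most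
`(4β²/ζ² + 1)·e`. -/
theorem stmt11 {Z : Type*} (G : Set (Z → ℝ))
    (hG : ∀ g ∈ G, ∀ z, g z ∈ Set.Icc (0 : ℝ) 1)
    (ζ β : ℝ) (hζ : 0 < ζ) (hβ : 0 < β)
    (e : ℕ)
    (he : ∀ (m : ℕ) (w : Fin m → Z),
      (∀ i : Fin m, ∃ g ∈ G, ζ < g (w i) ∧
        ∑ j ∈ Finset.univ.filter (fun j : Fin m => j < i), (g (w j)) ^ 2 ≤ ζ ^ 2) → m ≤ e)
    (T : ℕ) (z : ℕ → Z) :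
    ((Finset.range T).filter fun t =>
        ∃ g ∈ G, (∑ j ∈ Finset.range t, (g (z j)) ^ 2 ≤ 4 * β ^ 2) ∧ ζ < g (z t)).card
      ≤ (4 * β ^ 2 / ζ ^ 2 + 1) * e := by
  classical
  set P : ℕ → Prop := fun t =>
    ∃ g ∈ G, (∑ j ∈ Finset.range t, (g (z j)) ^ 2 ≤ 4 * β ^ 2) ∧ ζ < g (z t) with hP
  set gf : ℕ → (Z → ℝ) := fun t => if h : P t then h.choose else fun _ => 0 with hgf
  have gf_spec : ∀ t, P t → gf t ∈ G ∧
      (∑ j ∈ Finset.range t, (gf t (z j)) ^ 2 ≤ 4 * β ^ 2) ∧ ζ < gf t (z t) := by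
    intro t ht
    simp only [hgf, dif_pos ht]
    exact ⟨ht.choose_spec.1, ht.choose_spec.2⟩
  set c : ℕ → ℕ → ℝ := fun t j => (gf t (z j)) ^ 2 with hc
  have hcnn : ∀ t j, 0 ≤ c t j := fun t j => sq_nonneg _
  set τ : ℝ := ζ ^ 2 with hτdef
  have hτ : 0 < τ := pow_pos hζ 2
  set K : ℕ := Nat.floor (4 * β ^ 2 / ζ ^ 2) + 1 with hKdef
  have hβζ : (0:ℝ) ≤ 4 * β ^ 2 / ζ ^ 2 := by positivity
  have hKτ : 4 * β ^ 2 < K * τ := by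
    have h1 : 4 * β ^ 2 / ζ ^ 2 < K := by
      rw [hKdef]; push_cast; exact Nat.lt_floor_add_one _
    calc 4 * β ^ 2 = (4 * β ^ 2 / ζ ^ 2) * ζ ^ 2 := by field_simp
      _ < K * τ := by
          apply mul_lt_mul_of_pos_right h1 hτ
  -- each t with P t and t < T lies in some bin with index < K
  have hmem : ∀ t < T, P t → ∃ k < K, t ∈ EluderAux.bins c τ P T k := by
    intro t hT ht
    refine ⟨EluderAux.pickBin c τ t (EluderAux.bins c τ P t), ?_, ?_⟩
    · exact EluderAux.pickBin_lt c hτ P t (hcnn t) (gf_spec t ht).2.1 hKτ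
    · exact EluderAux.mem_bins_self c τ P hT ht
  -- each bin has at most e elements
  have hcard : ∀ k, (EluderAux.bins c τ P T k).card ≤ e := by
    intro k
    set B := EluderAux.bins c τ P T k with hB
    set m := B.card with hm
    set φ := B.orderIsoOfFin rfl with hφ
    apply he m (fun i => z (φ i))
    intro i
    set t : ℕ := (φ i : ℕ) with htdef
    have htB : t ∈ B := (φ i).2
    obtain ⟨htT, htP, htk⟩ := (EluderAux.mem_bins c τ P).mp htB
    refine ⟨gf t, (gf_spec t htP).1, (gf_spec t htP).2.2, ?_⟩
    have himg : (Finset.univ.filter (fun j : Fin m => j < i)).image (fun j => (φ j : ℕ))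
        = B.filter (· < t) := by
      ext s
      simp only [Finset.mem_image, Finset.mem_filter, Finset.mem_univ, true_and]
      constructor
      · rintro ⟨j, hj, rfl⟩
        exact ⟨(φ j).2, by exact_mod_cast (OrderIso.lt_iff_lt φ).mpr hj⟩
      · rintro ⟨hs, hst⟩
        refine ⟨φ.symm ⟨s, hs⟩, ?_, ?_⟩
        · rw [← OrderIso.lt_iff_lt φ, OrderIso.apply_symm_apply]
          exact_mod_cast hst
        · rw [OrderIso.apply_symm_apply]
      done
    have hinj : Set.InjOn (fun j : Fin m => (φ j : ℕ))
        ↑(Finset.univ.filter (fun j : Fin m => j < i)) := by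
      intro a _ b _ hab
      exact φ.injective (Subtype.ext hab)
    have hsum : ∑ j ∈ Finset.univ.filter (fun j : Fin m => j < i), (gf t (z (φ j))) ^ 2
        = ∑ s ∈ B.filter (· < t), (gf t (z s)) ^ 2 := by
      rw [← himg, Finset.sum_image]
      intro a ha b hb hab
      exact φ.injective (Subtype.ext hab)
    rw [hsum]
    have : B.filter (· < t) = EluderAux.bins c τ P t k :=
      EluderAux.bins_filter c τ P htT.le
    rw [this, htk]
    exact EluderAux.pickBin_spec c hτ.le P t
  -- conclude
  have hsub : (Finset.range T).filter P ⊆ (Finset.range K).biUnion (EluderAux.bins c τ P T) := by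
    intro t ht
    obtain ⟨htT, htP⟩ := Finset.mem_filter.mp ht
    obtain ⟨k, hk, hmem'⟩ := hmem t (Finset.mem_range.mp htT) htP
    exact Finset.mem_biUnion.mpr ⟨k, Finset.mem_range.mpr hk, hmem'⟩
  have h1 : ((Finset.range T).filter P).card ≤ K * e := by
    calc ((Finset.range T).filter P).card
        ≤ ((Finset.range K).biUnion (EluderAux.bins c τ P T)).card :=
          Finset.card_le_card hsub
      _ ≤ ∑ k ∈ Finset.range K, (EluderAux.bins c τ P T k).card :=
          Finset.card_biUnion_le
      _ ≤ ∑ _k ∈ Finset.range K, e := Finset.sum_le_sum fun k _ => hcard k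
      _ = K * e := by rw [Finset.sum_const, Finset.card_range, smul_eq_mul]
  have h2 : ((K : ℝ)) ≤ 4 * β ^ 2 / ζ ^ 2 + 1 := by
    rw [hKdef]
    push_cast
    linarith [Nat.floor_le hβζ]
  calc (((Finset.range T).filter P).card : ℝ) ≤ (K * e : ℕ) := by exact_mod_cast h1
    _ = (K : ℝ) * e := by push_cast; ring
    _ ≤ (4 * β ^ 2 / ζ ^ 2 + 1) * e := by
        apply mul_le_mul_of_nonneg_right h2 (Nat.cast_nonneg e)
end

section
/- Reverse-KL Fano method: Let M ≥ 2, let P⁽¹⁾,…,P⁽ᴹ⁾ be probability measures on a sample space H, and let Q be any fixed reference probability measure on H. Let P be the joint law of (m*, H) obtained by sampling m* uniformly from {1,…,M} and then H ∼ P^{(m*)}. If a measurable estimator m̂(H) satisfies P(m̂ = m*) ≥ 1 − δ, then (1/2)·log(1/δ) − log 2 ≤ (1/M)·∑_{i=1}^M KL(Q ‖ P⁽ⁱ⁾). -/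
open MeasureTheory ENNReal

private lemma log_sum_ineq {ι : Type*} (s : Finset ι) (a b : ι → ℝ)
    (ha : ∀ i ∈ s, 0 ≤ a i) (hb : ∀ i ∈ s, 0 ≤ b i)
    (hab : ∀ i ∈ s, b i = 0 → a i = 0) :
    (∑ i ∈ s, a i) * Real.log ((∑ i ∈ s, a i) / (∑ i ∈ s, b i))
      ≤ ∑ i ∈ s, a i * Real.log (a i / b i) := by
  set A := ∑ i ∈ s, a i with hAdef
  set B := ∑ i ∈ s, b i with hBdef
  by_cases hz : ∀ i ∈ s, a i = 0
  · have h1 : A = 0 := Finset.sum_eq_zero hz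
    have h2 : ∑ i ∈ s, a i * Real.log (a i / b i) = 0 :=
      Finset.sum_eq_zero fun i hi => by rw [hz i hi, zero_mul]
    rw [h1, h2, zero_mul]
  · push_neg at hz
    obtain ⟨j, hj, hja⟩ := hz
    have haj : 0 < a j := (ha j hj).lt_of_ne (Ne.symm hja)
    have hA0 : 0 < A := by
      have := Finset.single_le_sum (f := a) (fun i hi => ha i hi) hj
      linarith
    have hB0 : 0 < B := by
      have hbj : 0 < b j := by
        rcases (hb j hj).lt_or_eq with h | h
        · exact h
        · exact absurd (hab j hj h.symm) hja
      have := Finset.single_le_sum (f := b) (fun i hi => hb i hi) hj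
      linarith
    have key : ∀ i ∈ s, a i * Real.log (A / B) + (a i - (A / B) * b i)
        ≤ a i * Real.log (a i / b i) := by
      intro i hi
      rcases (ha i hi).lt_or_eq with hai | hai
      · have hbi : 0 < b i := by
          rcases (hb i hi).lt_or_eq with h | h
          · exact h
          · exact absurd (hab i hi h.symm) hai.ne'
        have hpos : 0 < (A * b i) / (B * a i) := by positivity
        have h1 := Real.log_le_sub_one_of_pos hpos
        have hlog : Real.log ((A * b i) / (B * a i))
            = Real.log (A / B) - Real.log (a i / b i) := by
          rw [Real.log_div (by positivity : (0:ℝ) < A * b i).ne'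
              (by positivity : (0:ℝ) < B * a i).ne',
            Real.log_div hA0.ne' hB0.ne', Real.log_div hai.ne' hbi.ne',
            Real.log_mul hA0.ne' hbi.ne', Real.log_mul hB0.ne' hai.ne']
          ring
        rw [hlog] at h1
        have h2 : a i * (Real.log (A / B) - Real.log (a i / b i))
            ≤ a i * ((A * b i) / (B * a i) - 1) :=
          mul_le_mul_of_nonneg_left h1 hai.le
        have h3 : a i * ((A * b i) / (B * a i) - 1) = (A / B) * b i - a i := by
          field_simp
        rw [h3, mul_sub] at h2
        linarith
      · have hnn : 0 ≤ (A / B) * b i := by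
          have := hb i hi
          positivity
        rw [← hai, zero_mul, zero_mul, zero_add, zero_sub]
        linarith
    have hsum := Finset.sum_le_sum key
    have heq : ∑ i ∈ s, (a i * Real.log (A / B) + (a i - (A / B) * b i))
        = A * Real.log (A / B) + (A - (A / B) * B) := by
      rw [Finset.sum_add_distrib, ← Finset.sum_mul, Finset.sum_sub_distrib, ← Finset.mul_sum]
    have hcan : (A / B) * B = A := div_mul_cancel₀ A hB0.ne'
    rw [heq, hcan] at hsum
    linarith

private lemma entropy_ge {x : ℝ} (hx0 : 0 < x) (hx1 : x < 1) :
    -Real.log 2 ≤ x * Real.log x + (1 - x) * Real.log (1 - x) := by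
  have hx1' : 0 < 1 - x := by linarith
  have h1 : 1 - (2 * x)⁻¹ ≤ Real.log (2 * x) :=
    Real.one_sub_inv_le_log_of_pos (by linarith)
  have h2 : 1 - (2 * (1 - x))⁻¹ ≤ Real.log (2 * (1 - x)) :=
    Real.one_sub_inv_le_log_of_pos (by linarith)
  have e1 : Real.log (2 * x) = Real.log 2 + Real.log x :=
    Real.log_mul two_ne_zero hx0.ne'
  have e2 : Real.log (2 * (1 - x)) = Real.log 2 + Real.log (1 - x) :=
    Real.log_mul two_ne_zero hx1'.ne'
  have m1 : x * (1 - (2 * x)⁻¹) ≤ x * (Real.log 2 + Real.log x) := by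
    rw [← e1]; exact mul_le_mul_of_nonneg_left h1 hx0.le
  have m2 : (1 - x) * (1 - (2 * (1 - x))⁻¹)
      ≤ (1 - x) * (Real.log 2 + Real.log (1 - x)) := by
    rw [← e2]; exact mul_le_mul_of_nonneg_left h2 hx1'.le
  have c1 : x * (1 - (2 * x)⁻¹) = x - 1 / 2 := by
    field_simp
  have c2 : (1 - x) * (1 - (2 * (1 - x))⁻¹) = (1 - x) - 1 / 2 := by
    field_simp
  rw [c1, mul_add] at m1
  rw [c2, mul_add] at m2
  have : x * Real.log 2 + (1 - x) * Real.log 2 = Real.log 2 := by ring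
  linarith

set_option maxHeartbeats 1000000 in
private lemma findim (M : ℕ) (hM : 2 ≤ M) (q p : Fin M → ℝ)
    (hq0 : ∀ i, 0 ≤ q i) (hq1 : ∀ i, q i ≤ 1)
    (hp0 : ∀ i, 0 ≤ p i) (hp1 : ∀ i, p i ≤ 1)
    (hqs : ∑ i, q i = 1)
    (hqp0 : ∀ i, p i = 0 → q i = 0) (hqp1 : ∀ i, p i = 1 → q i = 1)
    (δ : ℝ) (hδ : 0 < δ)
    (hcor : 1 - δ ≤ (1 / (M : ℝ)) * ∑ i, p i) :
    (1 / 2) * Real.log (1 / δ) - Real.log 2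
      ≤ (1 / (M : ℝ)) * ∑ i, (q i * Real.log (q i / p i)
          + (1 - q i) * Real.log ((1 - q i) / (1 - p i))) := by
  have hm2 : (2 : ℝ) ≤ (M : ℝ) := by exact_mod_cast hM
  have hm0 : (0 : ℝ) < (M : ℝ) := by linarith
  set B := ∑ i, p i with hBdef
  have hB_le : B ≤ (M : ℝ) := by
    calc B ≤ ∑ _i : Fin M, (1 : ℝ) := Finset.sum_le_sum fun i _ => hp1 i
      _ = (M : ℝ) := by simp
  have hB_pos : 0 < B := by
    rcases (Finset.sum_nonneg fun i (_ : i ∈ Finset.univ) => hp0 i).lt_or_eq with h | h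
    · exact h
    · exfalso
      have hp' : ∀ i ∈ Finset.univ, p i = 0 :=
        (Finset.sum_eq_zero_iff_of_nonneg fun i _ => hp0 i).mp h.symm
      have : ∑ i, q i = 0 := Finset.sum_eq_zero fun i hi => hqp0 i (hp' i hi)
      rw [hqs] at this; norm_num at this
  have hB_lt : B < (M : ℝ) := by
    rcases hB_le.lt_or_eq with h | h
    · exact h
    · exfalso
      have hsum : ∑ i, (1 - p i) = 0 := by
        rw [Finset.sum_sub_distrib]
        simp [← hBdef, h]
      have hone : ∀ i ∈ Finset.univ, (1 : ℝ) - p i = 0 :=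
        (Finset.sum_eq_zero_iff_of_nonneg fun i _ => by linarith [hp1 i]).mp hsum
      have : ∑ i, q i = (M : ℝ) := by
        rw [Finset.sum_congr rfl fun i hi => hqp1 i (by linarith [hone i hi])]
        simp
      rw [hqs] at this; linarith
  have hS1 := log_sum_ineq Finset.univ q p (fun i _ => hq0 i) (fun i _ => hp0 i)
    (fun i _ => hqp0 i)
  rw [hqs, ← hBdef] at hS1
  have hsum1q : ∑ i, (1 - q i) = (M : ℝ) - 1 := by
    rw [Finset.sum_sub_distrib]; simp [hqs]
  have hsum1p : ∑ i, (1 - p i) = (M : ℝ) - B := by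
    rw [Finset.sum_sub_distrib]; simp [← hBdef]
  have hS2 := log_sum_ineq Finset.univ (fun i => 1 - q i) (fun i => 1 - p i)
      (fun i _ => by linarith [hq1 i]) (fun i _ => by linarith [hp1 i])
      (fun i _ h => by have := hqp1 i (by linarith); linarith)
  rw [hsum1q, hsum1p] at hS2
  have hsplit : ∑ i, (q i * Real.log (q i / p i)
        + (1 - q i) * Real.log ((1 - q i) / (1 - p i)))
      = (∑ i, q i * Real.log (q i / p i))
        + ∑ i, (1 - q i) * Real.log ((1 - q i) / (1 - p i)) :=
    Finset.sum_add_distrib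
  set S := ∑ i, (q i * Real.log (q i / p i)
      + (1 - q i) * Real.log ((1 - q i) / (1 - p i))) with hSdef
  have hL : 1 * Real.log (1 / B)
      + ((M : ℝ) - 1) * Real.log (((M : ℝ) - 1) / ((M : ℝ) - B)) ≤ S := by
    rw [hsplit]
    exact add_le_add hS1 hS2
  rw [one_mul] at hL
  have hmB : 0 < (M : ℝ) - B := by linarith
  have hm1 : 0 < (M : ℝ) - 1 := by linarith
  set L := Real.log (1 / B)
      + ((M : ℝ) - 1) * Real.log (((M : ℝ) - 1) / ((M : ℝ) - B)) with hLdef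
  have hLS : (1 / (M : ℝ)) * L ≤ (1 / (M : ℝ)) * S :=
    mul_le_mul_of_nonneg_left hL (by positivity)
  by_cases hδ1 : 1 ≤ δ
  · -- target is negative; suffices RHS ≥ 0
    have u1 : Real.log B ≤ B - 1 := Real.log_le_sub_one_of_pos hB_pos
    have u2 : Real.log (((M : ℝ) - B) / ((M : ℝ) - 1))
        ≤ ((M : ℝ) - B) / ((M : ℝ) - 1) - 1 :=
      Real.log_le_sub_one_of_pos (by positivity)
    have u2' : ((M : ℝ) - 1) * Real.log (((M : ℝ) - B) / ((M : ℝ) - 1))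
        ≤ ((M : ℝ) - B) - ((M : ℝ) - 1) := by
      have := mul_le_mul_of_nonneg_left u2 hm1.le
      have heq : ((M : ℝ) - 1) * (((M : ℝ) - B) / ((M : ℝ) - 1) - 1)
          = ((M : ℝ) - B) - ((M : ℝ) - 1) := by
        field_simp
      linarith
    have e1 : Real.log (1 / B) = -Real.log B := by
      rw [one_div, Real.log_inv]
    have e2 : Real.log (((M : ℝ) - 1) / ((M : ℝ) - B))
        = -Real.log (((M : ℝ) - B) / ((M : ℝ) - 1)) := by
      rw [Real.log_div hm1.ne' hmB.ne', Real.log_div hmB.ne' hm1.ne']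
      ring
    have hL0 : 0 ≤ L := by
      rw [hLdef, e1, e2]
      nlinarith [u1, u2']
    have hRHS : 0 ≤ (1 / (M : ℝ)) * S := by
      have : 0 ≤ (1 / (M : ℝ)) * L := by positivity
      linarith
    have hlogδ : Real.log (1 / δ) ≤ 0 :=
      Real.log_nonpos (by positivity) (by rw [div_le_one hδ]; linarith)
    have hlog2 : 0 < Real.log 2 := Real.log_pos one_lt_two
    linarith
  · push_neg at hδ1
    have hmδ : (M : ℝ) - B ≤ (M : ℝ) * δ := by
      have h' := mul_le_mul_of_nonneg_left hcor hm0.le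
      have he : (M : ℝ) * ((1 / (M : ℝ)) * B) = B := by field_simp
      rw [he] at h'
      nlinarith
    have hmδ0 : 0 < (M : ℝ) * δ := by positivity
    have t1 : Real.log (1 / (M : ℝ)) ≤ Real.log (1 / B) := by
      apply Real.log_le_log (by positivity)
      gcongr
    have t2 : Real.log (((M : ℝ) - 1) / ((M : ℝ) * δ))
        ≤ Real.log (((M : ℝ) - 1) / ((M : ℝ) - B)) := by
      apply Real.log_le_log (by positivity)
      gcongr
    have t3 : Real.log (((M : ℝ) - 1) / ((M : ℝ) * δ))
        = Real.log (((M : ℝ) - 1) / (M : ℝ)) + Real.log (1 / δ) := by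
      rw [show ((M : ℝ) - 1) / ((M : ℝ) * δ)
          = (((M : ℝ) - 1) / (M : ℝ)) * (1 / δ) by field_simp]
      exact Real.log_mul (by positivity) (by positivity)
    have t4 : -Real.log 2 ≤ (1 / (M : ℝ)) * Real.log (1 / (M : ℝ))
        + (((M : ℝ) - 1) / (M : ℝ)) * Real.log (((M : ℝ) - 1) / (M : ℝ)) := by
      have hx0 : 0 < 1 / (M : ℝ) := by positivity
      have hx1 : 1 / (M : ℝ) < 1 := by rw [div_lt_one hm0]; linarith
      have := entropy_ge hx0 hx1
      have he : 1 - 1 / (M : ℝ) = ((M : ℝ) - 1) / (M : ℝ) := by field_simp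
      rw [he] at this
      linarith
    have t5 : (1 / 2 : ℝ) ≤ ((M : ℝ) - 1) / (M : ℝ) := by
      rw [le_div_iff₀ hm0]; linarith
    have t6 : 0 < Real.log (1 / δ) :=
      Real.log_pos (by rw [lt_div_iff₀ hδ]; linarith)
    have c1 : Real.log (1 / (M : ℝ))
        + ((M : ℝ) - 1) * (Real.log (((M : ℝ) - 1) / (M : ℝ)) + Real.log (1 / δ)) ≤ L := by
      rw [hLdef]
      have t2' : Real.log (((M : ℝ) - 1) / (M : ℝ)) + Real.log (1 / δ)
          ≤ Real.log (((M : ℝ) - 1) / ((M : ℝ) - B)) := by rw [← t3]; exact t2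
      have := mul_le_mul_of_nonneg_left t2' hm1.le
      linarith
    have c2 := mul_le_mul_of_nonneg_left c1 (by positivity : (0:ℝ) ≤ 1 / (M : ℝ))
    have c3 : (1 / (M : ℝ)) * (Real.log (1 / (M : ℝ))
          + ((M : ℝ) - 1) * (Real.log (((M : ℝ) - 1) / (M : ℝ)) + Real.log (1 / δ)))
        = (1 / (M : ℝ)) * Real.log (1 / (M : ℝ))
          + (((M : ℝ) - 1) / (M : ℝ)) * Real.log (((M : ℝ) - 1) / (M : ℝ))
          + (((M : ℝ) - 1) / (M : ℝ)) * Real.log (1 / δ) := by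
      ring
    have c4 : (1 / 2) * Real.log (1 / δ)
        ≤ (((M : ℝ) - 1) / (M : ℝ)) * Real.log (1 / δ) :=
      mul_le_mul_of_nonneg_right t5 t6.le
    linarith [c2, c3, c4, hLS, t4]

private lemma set_log_rnDeriv_ge {H : Type*} [MeasurableSpace H] (P Q : Measure H)
    [IsProbabilityMeasure P] [IsProbabilityMeasure Q] (hac : Q ≪ P)
    (hint : Integrable (fun h => Real.log (Q.rnDeriv P h).toReal) Q)
    {A : Set H} (hA : MeasurableSet A) :
    (Q A).toReal * Real.log ((Q A).toReal / (P A).toReal)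
      ≤ ∫ h in A, Real.log (Q.rnDeriv P h).toReal ∂Q := by
  by_cases hQA : Q A = 0
  · rw [hQA]
    simp [Measure.restrict_eq_zero.mpr hQA]
  · have hPA : P A ≠ 0 := fun h => hQA (hac h)
    set q := (Q A).toReal with hq
    set p := (P A).toReal with hp
    have hq_pos : 0 < q := ENNReal.toReal_pos hQA (measure_ne_top Q A)
    have hp_pos : 0 < p := ENNReal.toReal_pos hPA (measure_ne_top P A)
    set c := q / p with hc
    have hc_pos : 0 < c := div_pos hq_pos hp_pos
    have hmeasD := Measure.measurable_rnDeriv Q P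
    -- key lintegral bound : ∫⁻_A (dQ/dP)⁻¹ dQ ≤ P A
    have key : ∫⁻ h in A, (Q.rnDeriv P h)⁻¹ ∂Q ≤ P A := by
      have h1 : ∫⁻ h, Q.rnDeriv P h * (A.indicator fun x => (Q.rnDeriv P x)⁻¹) h ∂P
          = ∫⁻ h, (A.indicator fun x => (Q.rnDeriv P x)⁻¹) h ∂Q :=
        lintegral_rnDeriv_mul hac ((hmeasD.inv.indicator hA).aemeasurable)
      rw [lintegral_indicator hA] at h1
      rw [← h1]
      calc ∫⁻ h, Q.rnDeriv P h * (A.indicator fun x => (Q.rnDeriv P x)⁻¹) h ∂P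
          ≤ ∫⁻ h, (A.indicator fun _ => (1 : ℝ≥0∞)) h ∂P := by
            apply lintegral_mono
            intro x
            by_cases hx : x ∈ A
            · simp only [Set.indicator_of_mem hx]
              rcases eq_or_ne (Q.rnDeriv P x) 0 with h0 | h0
              · simp [h0]
              rcases eq_or_ne (Q.rnDeriv P x) ∞ with ht | ht
              · simp [ht]
              · rw [ENNReal.mul_inv_cancel h0 ht]
            · simp [Set.indicator_of_notMem hx]
        _ = P A := by
            rw [lintegral_indicator hA]
            simp
    have int_inv : Integrable (fun h => ((Q.rnDeriv P h).toReal)⁻¹) (Q.restrict A) := by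
      refine ⟨(hmeasD.ennreal_toReal.inv).aestronglyMeasurable, ?_⟩
      rw [hasFiniteIntegral_iff_ofReal (ae_of_all _ fun x =>
        inv_nonneg.mpr ENNReal.toReal_nonneg)]
      refine lt_of_le_of_lt (le_trans (lintegral_mono fun x => ?_) key) (measure_lt_top P A)
      rw [← ENNReal.toReal_inv]
      exact ENNReal.ofReal_toReal_le
    have int_le : ∫ h in A, ((Q.rnDeriv P h).toReal)⁻¹ ∂Q ≤ p := by
      rw [integral_eq_lintegral_of_nonneg_ae (ae_of_all _ fun x =>
        inv_nonneg.mpr ENNReal.toReal_nonneg)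
        (hmeasD.ennreal_toReal.inv).aestronglyMeasurable]
      have hb : ∫⁻ h in A, ENNReal.ofReal (((Q.rnDeriv P h).toReal)⁻¹) ∂Q ≤ P A := by
        refine le_trans (lintegral_mono fun x => ?_) key
        rw [← ENNReal.toReal_inv]
        exact ENNReal.ofReal_toReal_le
      exact ENNReal.toReal_mono (measure_ne_top P A) hb
    have hae : ∀ᵐ h ∂(Q.restrict A),
        Real.log c + (1 - c * ((Q.rnDeriv P h).toReal)⁻¹)
          ≤ Real.log (Q.rnDeriv P h).toReal := by
      refine ae_restrict_of_ae ?_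
      have h1 : ∀ᵐ x ∂Q, 0 < Q.rnDeriv P x := Measure.rnDeriv_pos hac
      have h2 : ∀ᵐ x ∂Q, Q.rnDeriv P x < ∞ := hac.ae_le (Measure.rnDeriv_lt_top Q P)
      filter_upwards [h1, h2] with x hx1 hx2
      have ht_pos : 0 < (Q.rnDeriv P x).toReal := ENNReal.toReal_pos hx1.ne' hx2.ne
      have hlog := Real.log_le_sub_one_of_pos
        (show 0 < c / (Q.rnDeriv P x).toReal by positivity)
      rw [Real.log_div hc_pos.ne' ht_pos.ne', div_eq_mul_inv] at hlog
      linarith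
    have i3 : Integrable (fun h => c * ((Q.rnDeriv P h).toReal)⁻¹) (Q.restrict A) :=
      int_inv.const_mul c
    have i2 : Integrable (fun h => 1 - c * ((Q.rnDeriv P h).toReal)⁻¹) (Q.restrict A) :=
      (integrable_const 1).sub i3
    have int_lhs : Integrable
        (fun h => Real.log c + (1 - c * ((Q.rnDeriv P h).toReal)⁻¹)) (Q.restrict A) :=
      (integrable_const _).add i2
    have hmono := integral_mono_ae int_lhs (hint.restrict) hae
    have hcomp : ∫ h in A, (Real.log c + (1 - c * ((Q.rnDeriv P h).toReal)⁻¹)) ∂Q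
        = q * Real.log c + (q - c * ∫ h in A, ((Q.rnDeriv P h).toReal)⁻¹ ∂Q) := by
      rw [integral_add (integrable_const _) i2, integral_sub (integrable_const 1) i3,
        integral_const, integral_const, integral_const_mul]
      simp [Measure.restrict_apply_univ, smul_eq_mul, mul_comm]
      rfl
    rw [hcomp] at hmono
    have hcp : c * p = q := div_mul_cancel₀ q hp_pos.ne'
    have hle : c * ∫ h in A, ((Q.rnDeriv P h).toReal)⁻¹ ∂Q ≤ q := by
      calc c * ∫ h in A, ((Q.rnDeriv P h).toReal)⁻¹ ∂Q ≤ c * p :=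
            mul_le_mul_of_nonneg_left int_le hc_pos.le
        _ = q := hcp
    have : q * Real.log (q / p) = q * Real.log c := by rw [hc]
    linarith

/-- **Fano method with reverse KL divergence (Lemma `lem:fano`).** -/
theorem stmt14 {H : Type*} [MeasurableSpace H] (M : ℕ) (hM : 2 ≤ M)
    (P : Fin M → Measure H) [∀ i, IsProbabilityMeasure (P i)]
    (Q : Measure H) [IsProbabilityMeasure Q]
    (hac : ∀ i, Q ≪ P i)
    (hint : ∀ i, Integrable (fun h => Real.log (Q.rnDeriv (P i) h).toReal) Q)
    (mhat : H → Fin M) (hmeas : Measurable mhat)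
    (δ : ℝ) (hδ : 0 < δ)
    (hcorrect : 1 - δ ≤ (1 / (M : ℝ)) * ∑ i, ((P i) {h | mhat h = i}).toReal) :
    (1 / 2) * Real.log (1 / δ) - Real.log 2 ≤
      (1 / (M : ℝ)) * ∑ i, ∫ h, Real.log (Q.rnDeriv (P i) h).toReal ∂Q := by
  classical
  set A : Fin M → Set H := fun i => mhat ⁻¹' {i} with hAdef
  have hAmeas : ∀ i, MeasurableSet (A i) := fun i => hmeas (measurableSet_singleton i)
  set q : Fin M → ℝ := fun i => (Q (A i)).toReal with hqdef
  set p : Fin M → ℝ := fun i => ((P i) (A i)).toReal with hpdef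
  have hq0 : ∀ i, 0 ≤ q i := fun i => ENNReal.toReal_nonneg
  have hp0 : ∀ i, 0 ≤ p i := fun i => ENNReal.toReal_nonneg
  have hq1 : ∀ i, q i ≤ 1 := fun i => by
    have := ENNReal.toReal_mono (by simp : (1 : ℝ≥0∞) ≠ ∞) (prob_le_one (μ := Q) (s := A i))
    simpa using this
  have hp1 : ∀ i, p i ≤ 1 := fun i => by
    have := ENNReal.toReal_mono (by simp : (1 : ℝ≥0∞) ≠ ∞) (prob_le_one (μ := P i) (s := A i))
    simpa using this
  -- complement values
  have hqc : ∀ i, (Q (A i)ᶜ).toReal = 1 - q i := fun i => by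
    rw [prob_compl_eq_one_sub (hAmeas i),
      ENNReal.toReal_sub_of_le (prob_le_one) (by simp)]
    simp
    rfl
  have hpc : ∀ i, ((P i) (A i)ᶜ).toReal = 1 - p i := fun i => by
    rw [prob_compl_eq_one_sub (hAmeas i),
      ENNReal.toReal_sub_of_le (prob_le_one) (by simp)]
    simp
    rfl
  -- sum of q equals 1
  have hqs : ∑ i, q i = 1 := by
    have h1 : ∑ i, Q (A i) = 1 := by
      rw [hAdef]
      rw [sum_measure_preimage_singleton Finset.univ (fun i _ => hmeas (measurableSet_singleton i))]
      simp
    have h2 : (∑ i, Q (A i)).toReal = ∑ i, q i := by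
      rw [ENNReal.toReal_sum (fun i _ => measure_ne_top Q (A i))]
    rw [← h2, h1]
    simp
  -- absolute continuity transfers
  have hqp0 : ∀ i, p i = 0 → q i = 0 := by
    intro i h
    have hP0 : (P i) (A i) = 0 := by
      have := (ENNReal.toReal_eq_zero_iff _).mp h
      rcases this with h' | h'
      · exact h'
      · exact absurd h' (measure_ne_top _ _)
    have := hac i hP0
    simp [hqdef, this]
  have hqp1 : ∀ i, p i = 1 → q i = 1 := by
    intro i h
    have hP1 : ((P i) (A i)ᶜ).toReal = 0 := by rw [hpc i, h]; ring
    have hPc0 : (P i) (A i)ᶜ = 0 := by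
      have := (ENNReal.toReal_eq_zero_iff _).mp hP1
      rcases this with h' | h'
      · exact h'
      · exact absurd h' (measure_ne_top _ _)
    have hQc0 : Q (A i)ᶜ = 0 := hac i hPc0
    have : (Q (A i)ᶜ).toReal = 0 := by rw [hQc0]; simp
    rw [hqc i] at this
    linarith
  -- pointwise KL lower bound
  have key : ∀ i, q i * Real.log (q i / p i)
      + (1 - q i) * Real.log ((1 - q i) / (1 - p i))
      ≤ ∫ h, Real.log (Q.rnDeriv (P i) h).toReal ∂Q := by
    intro i
    have h1 := set_log_rnDeriv_ge (P i) Q (hac i) (hint i) (hAmeas i)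
    have h2 := set_log_rnDeriv_ge (P i) Q (hac i) (hint i) (hAmeas i).compl
    rw [hqc i, hpc i] at h2
    have h3 : ∫ h in A i, Real.log (Q.rnDeriv (P i) h).toReal ∂Q
        + ∫ h in (A i)ᶜ, Real.log (Q.rnDeriv (P i) h).toReal ∂Q
        = ∫ h, Real.log (Q.rnDeriv (P i) h).toReal ∂Q :=
      integral_add_compl (hAmeas i) (hint i)
    rw [← h3]
    exact add_le_add h1 h2
  -- correctness in terms of p
  have hcor2 : 1 - δ ≤ (1 / (M : ℝ)) * ∑ i, p i := hcorrect
  have hfin := findim M hM q p hq0 hq1 hp0 hp1 hqs hqp0 hqp1 δ hδ hcor2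
  have hsum_le : ∑ i, (q i * Real.log (q i / p i)
        + (1 - q i) * Real.log ((1 - q i) / (1 - p i)))
      ≤ ∑ i, ∫ h, Real.log (Q.rnDeriv (P i) h).toReal ∂Q :=
    Finset.sum_le_sum fun i _ => key i
  have hmul := mul_le_mul_of_nonneg_left hsum_le
    (by positivity : (0:ℝ) ≤ 1 / (M : ℝ))
  linarith
end

section
/- Let π(a|x) ∈ Δ(A) be the inverse-gap-weighted distribution over a finite set A' ⊆ A defined, for a predictor f̂ with â = argmax_{a∈A'} f̂(x,a) and learning rate γ > 0, by p(a) = 1/(|A'| + γ·(f̂(x,â) − f̂(x,a))) for a ∈ A' \ {â}, p(â) = 1 − ∑_{a ∈ A'\{â}} p(a), and p(a) = 0 for a ∉ A'. Then: (i) p is a valid probability distribution, i.e. p(a) ≥ 0 for all a and in particular p(â) ≥ 1/|A'|; and (ii) ∑_{a∈A'} p(a)·(f̂(x,â) − f̂(x,a)) ≤ (|A'| − 1)/γ. -/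
open scoped Classical

/-- **The inverse gap weighting distribution is valid and has small estimated
regret.** Given a finite action subset `A' ∋ â` where `â` maximizes `f̂(x,·)` over
`A'`, and a learning rate `γ > 0`, the inverse-gap-weighted distribution
`p(a) = 1/(|A'| + γ(f̂(x,â) − f̂(x,a)))` for `a ∈ A' \ {â}`,
`p(â) = 1 − ∑_{a ∈ A'\{â}} p(a)`, `p(a) = 0` for `a ∉ A'`, satisfies:
(i) `p` is a probability distribution with `p(a) ≥ 0` for all `a`, and in
particular `p(â) ≥ 1/|A'|`; and
(ii) `∑_{a ∈ A'} p(a)·(f̂(x,â) − f̂(x,a)) ≤ (|A'| − 1)/γ`. -/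
theorem stmt15 {X A : Type*} [Fintype A] [DecidableEq A]
    (fhat : X → A → ℝ) (x : X) (A' : Finset A) (hA' : A'.Nonempty)
    (γ : ℝ) (hγ : 0 < γ) (ahat : A) (hahat : ahat ∈ A')
    (hmax : ∀ a ∈ A', fhat x a ≤ fhat x ahat)
    (p : A → ℝ)
    (hp : ∀ a, p a = if a ∈ A' then
        (if a = ahat then
          1 - ∑ b ∈ A'.erase ahat, 1 / ((A'.card : ℝ) + γ * (fhat x ahat - fhat x b))
        else 1 / ((A'.card : ℝ) + γ * (fhat x ahat - fhat x a)))
      else 0) :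
    (∀ a, 0 ≤ p a) ∧ (1 / (A'.card : ℝ) ≤ p ahat) ∧ (∑ a, p a = 1) ∧
      ∑ a ∈ A', p a * (fhat x ahat - fhat x a) ≤ ((A'.card : ℝ) - 1) / γ := by
  set n : ℝ := (A'.card : ℝ) with hn
  have hncard : 0 < A'.card := Finset.card_pos.mpr hA'
  have hnpos : 0 < n := by rw [hn]; exact_mod_cast hncard
  have hD : ∀ a ∈ A', 0 < n + γ * (fhat x ahat - fhat x a) := by
    intro a ha
    have := hmax a ha
    nlinarith
  have hterm : ∀ a ∈ A'.erase ahat,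
      1 / (n + γ * (fhat x ahat - fhat x a)) ≤ 1 / n := by
    intro a ha
    have ha' := Finset.mem_of_mem_erase ha
    have := hmax a ha'
    have hD' := hD a ha'
    apply one_div_le_one_div_of_le hnpos
    nlinarith
  have hsumle : ∑ b ∈ A'.erase ahat, 1 / (n + γ * (fhat x ahat - fhat x b)) ≤ 1 - 1/n := by
    calc ∑ b ∈ A'.erase ahat, 1 / (n + γ * (fhat x ahat - fhat x b))
        ≤ ∑ b ∈ A'.erase ahat, 1 / n := Finset.sum_le_sum hterm
      _ = ((A'.erase ahat).card : ℝ) * (1/n) := by rw [Finset.sum_const, nsmul_eq_mul]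
      _ = (n - 1) * (1/n) := by
          rw [Finset.card_erase_of_mem hahat]
          congr 1
          rw [hn]
          push_cast [Nat.cast_sub hncard]
          ring_nf
      _ = 1 - 1/n := by field_simp
  have hpahat : p ahat = 1 - ∑ b ∈ A'.erase ahat, 1 / (n + γ * (fhat x ahat - fhat x b)) := by
    rw [hp]; simp [hahat]
  have hge : 1 / n ≤ p ahat := by rw [hpahat]; linarith
  have hpos : ∀ a, 0 ≤ p a := by
    intro a
    by_cases h2 : a = ahat
    · subst h2; exact le_trans (by positivity) hge
    rw [hp]
    split_ifs with h1
    · exact le_of_lt (one_div_pos.mpr (hD a h1))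
    · exact le_refl 0
  refine ⟨hpos, hge, ?_, ?_⟩
  · have hzero : ∀ a ∈ Finset.univ \ A', p a = 0 := by
      intro a ha
      rw [hp]
      simp [Finset.mem_sdiff.mp ha |>.2]
    rw [← Finset.sum_subset A'.subset_univ (fun a _ ha => by rw [hp]; simp [ha])]
    rw [← Finset.add_sum_erase _ p hahat, hpahat]
    have : ∀ a ∈ A'.erase ahat, p a = 1 / (n + γ * (fhat x ahat - fhat x a)) := by
      intro a ha
      rw [hp]
      simp [Finset.mem_of_mem_erase ha, Finset.ne_of_mem_erase ha]
    rw [Finset.sum_congr rfl this]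
    ring
  · rw [← Finset.add_sum_erase _ _ hahat]
    have hterm2 : ∀ a ∈ A'.erase ahat,
        p a * (fhat x ahat - fhat x a) ≤ 1 / γ := by
      intro a ha
      have ha' := Finset.mem_of_mem_erase ha
      have hDa := hD a ha'
      have hga := hmax a ha'
      rw [hp]
      simp only [ha', Finset.ne_of_mem_erase ha, if_true, if_false, if_pos]
      rw [div_mul_eq_mul_div, one_mul, div_le_div_iff₀ hDa hγ]
      nlinarith
    have h1 : ∑ a ∈ A'.erase ahat, p a * (fhat x ahat - fhat x a)
        ≤ ((A'.erase ahat).card : ℝ) * (1/γ) := by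
      rw [← nsmul_eq_mul, ← Finset.sum_const]
      exact Finset.sum_le_sum hterm2
    have hcard : ((A'.erase ahat).card : ℝ) = n - 1 := by
      rw [Finset.card_erase_of_mem hahat, hn]
      push_cast [Nat.cast_sub hncard]
      ring_nf
    rw [hcard] at h1
    have : p ahat * (fhat x ahat - fhat x ahat) = 0 := by ring
    rw [this]
    rw [div_eq_mul_one_div]
    linarith
end

section
/- In a block MDP with optimistic Q-function Q̄ satisfying Q̄_h(x,a) ≥ Q*_h(x,a) for all h, x, a, and greedy policy π(x) = argmax_a Q̄_h(x,a), if at a fixed layer h and latent state s the per-state gap satisfies Δ(x,a) ≥ Δ(s) whenever Δ(x,a) > 0 for x in the support of ψ(s), then E_{x∼ψ(s)}[ Ē_h(x, π(x))² / Δ(x, π(x)) ] ≤ (A/Δ(s)) · E_{x∼ψ(s)} E_{a∼unif(A)}[ Ē_h(x,a)² ], where Ē_h(x,a) ≥ 0 is the Bellman surplus and A = |A| is the number of actions. -/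
open MeasureTheory

/-- **Per-state surplus bound in a block MDP.** Fix a layer `h` and latent state
`s` with emission distribution `ψ = ψ(s)`. Let `Q̄` be optimistic (`Q̄ ≥ Q*`) with
greedy policy `π`, `V*(x) = max_a Q*(x,a)`, and let the Bellman surplus
`Ē(x,a) = Q̄(x,a) − (f*(x,a) + [P* V̄](x,a))` be nonnegative. If the gaps
`Δ(x,a) = V*(x) − Q*(x,a)` satisfy `Δ(x,a) ≥ Δ(s)` whenever `Δ(x,a) > 0`
(`ψ`-a.e. over the support of `ψ(s)`), then
`E_{x∼ψ}[Ē(x,π(x))² / Δ(x,π(x))] ≤ (A/Δ(s)) · E_{x∼ψ} E_{a∼unif(A)}[Ē(x,a)²]`,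
where `A = |A|` is the number of actions. -/
theorem stmt19 {X A : Type*} [MeasurableSpace X] [Fintype A] [Nonempty A]
    (ψ : Measure X) [IsProbabilityMeasure ψ]
    (Qbar Qstar Ebar fstar PV : X → A → ℝ) (Vstar : X → ℝ) (π : X → A)
    (hV : ∀ x, IsGreatest (Set.range fun a => Qstar x a) (Vstar x))
    (hopt : ∀ x a, Qstar x a ≤ Qbar x a)
    (hgreedy : ∀ x a, Qbar x a ≤ Qbar x (π x))
    (hE : ∀ x a, Ebar x a = Qbar x a - (fstar x a + PV x a))
    (hEpos : ∀ x a, 0 ≤ Ebar x a)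
    (Δs : ℝ) (hΔs : 0 < Δs)
    (hgap : ∀ᵐ x ∂ψ, ∀ a, 0 < Vstar x - Qstar x a → Δs ≤ Vstar x - Qstar x a)
    (hint1 : Integrable (fun x => (Ebar x (π x)) ^ 2 / (Vstar x - Qstar x (π x))) ψ)
    (hint2 : Integrable (fun x => (1 / (Fintype.card A : ℝ)) * ∑ a, (Ebar x a) ^ 2) ψ) :
    (∫ x, (Ebar x (π x)) ^ 2 / (Vstar x - Qstar x (π x)) ∂ψ) ≤
      ((Fintype.card A : ℝ) / Δs) *
        ∫ x, (1 / (Fintype.card A : ℝ)) * ∑ a, (Ebar x a) ^ 2 ∂ψ := by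
  set c : ℝ := (Fintype.card A : ℝ) / Δs with hc
  rw [show c * ∫ x, (1 / (Fintype.card A : ℝ)) * ∑ a, (Ebar x a) ^ 2 ∂ψ
      = ∫ x, c * ((1 / (Fintype.card A : ℝ)) * ∑ a, (Ebar x a) ^ 2) ∂ψ from
      (integral_const_mul c _).symm]
  refine integral_mono_ae hint1 (hint2.const_mul c) ?_
  filter_upwards [hgap] with x hx
  have hA : (0:ℝ) < (Fintype.card A : ℝ) := by
    exact_mod_cast Fintype.card_pos
  have hsum : (Ebar x (π x)) ^ 2 ≤ ∑ a, (Ebar x a) ^ 2 :=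
    Finset.single_le_sum (f := fun a => (Ebar x a) ^ 2) (fun a _ => sq_nonneg _) (Finset.mem_univ _)
  have hsum0 : (0:ℝ) ≤ ∑ a, (Ebar x a) ^ 2 :=
    Finset.sum_nonneg fun a _ => sq_nonneg _
  have hrhs : c * ((1 / (Fintype.card A : ℝ)) * ∑ a, (Ebar x a) ^ 2)
      = (∑ a, (Ebar x a) ^ 2) / Δs := by
    field_simp [hc]
    rw [hc, div_mul_eq_mul_div, div_mul_cancel₀ _ hΔs.ne']
  rw [hrhs]
  rcases eq_or_lt_of_le (sub_nonneg.mpr ((hV x).2 (Set.mem_range_self (π x)))) with h0 | hpos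
  · rw [← h0, div_zero]
    exact div_nonneg hsum0 hΔs.le
  · have hge : Δs ≤ Vstar x - Qstar x (π x) := hx (π x) hpos
    calc (Ebar x (π x)) ^ 2 / (Vstar x - Qstar x (π x))
        ≤ (Ebar x (π x)) ^ 2 / Δs := by
          exact div_le_div_of_nonneg_left (sq_nonneg _) hΔs hge
      _ ≤ (∑ a, (Ebar x a) ^ 2) / Δs :=
          div_le_div_of_nonneg_right hsum hΔs.le |>.trans_eq rfl
end
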